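/- arXiv:1101.2951 — 7 statements merged into one kernel-verified Lean document; each statement's English description precedes it below -/
import Mathlib

section
/- Let p be an odd prime and u an integer with Legendre symbol (−u | p) = −1. Let n be an integer with p ∤ n. Then for every integer t ≥ 1, the number of triples (x,y,z) ∈ (ℤ/p^tℤ)³ with u·x² + p·y² + p·u·z² = n equals p^{2t}·(1 − (−n | p)). -/
/-- The number of solutions `(x,y,z)` in `ℤ/p^tℤ` of
`u x² + p y² + p u z² = n`. -/
noncomputable def cnt (p t : ℕ) (u n : ℤ) : ℕ :=
  Nat.card {v : ZMod (p ^ t) × ZMod (p ^ t) × ZMod (p ^ t) |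
    (u : ZMod (p ^ t)) * v.1 ^ 2 + (p : ZMod (p ^ t)) * v.2.1 ^ 2 +
      (p : ZMod (p ^ t)) * (u : ZMod (p ^ t)) * v.2.2 ^ 2 = (n : ZMod (p ^ t))}

lemma my_two_ne_zero (p : ℕ) [hp : Fact p.Prime] (hp2 : p ≠ 2) : (2 : ZMod p) ≠ 0 := by
  intro h
  have h2 : ((2:ℕ) : ZMod p) = 0 := by exact_mod_cast h
  have := (ZMod.natCast_eq_zero_iff 2 p).mp h2
  exact hp2 ((Nat.prime_dvd_prime_iff_eq hp.out Nat.prime_two).mp this)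

/-- Hensel lifting of square roots of units modulo odd prime powers. -/
lemma sq_lift (p : ℕ) [hp : Fact p.Prime] (hp2 : p ≠ 2) (a : ℤ) (ha : ¬ (p:ℤ) ∣ a)
    (h : ∃ x : ℤ, (p:ℤ) ∣ x^2 - a) :
    ∀ t : ℕ, ∃ x : ℤ, (p:ℤ)^(t+1) ∣ x^2 - a := by
  intro t
  induction t with
  | zero => simpa using h
  | succ s ih =>
    obtain ⟨x, k, hk⟩ := ih
    have hpx : ¬ (p:ℤ) ∣ x := by
      intro hdvd
      have h1 : (p:ℤ) ∣ x^2 - a :=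
        dvd_trans (dvd_pow_self _ (Nat.succ_ne_zero s)) ⟨k, hk⟩
      have h2 : (p:ℤ) ∣ x^2 := by
        have := hdvd.mul_right x; simpa [sq] using this
      exact ha (by simpa using h2.sub h1)
    have h2x : ((2 * x : ℤ) : ZMod p) ≠ 0 := by
      push_cast
      refine mul_ne_zero (my_two_ne_zero p hp2) ?_
      intro hx0
      exact hpx ((ZMod.intCast_zmod_eq_zero_iff_dvd x p).mp hx0)
    obtain ⟨w, hw⟩ := ZMod.intCast_surjective
      (-(k : ZMod p) * ((2 * x : ℤ) : ZMod p)⁻¹)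
    have hdvd : (p:ℤ) ∣ 2 * x * w + k := by
      rw [← ZMod.intCast_zmod_eq_zero_iff_dvd]
      push_cast
      push_cast at hw h2x
      rw [hw]
      have hx0 : (x : ZMod p) ≠ 0 := right_ne_zero_of_mul h2x
      have h20 := my_two_ne_zero p hp2
      field_simp
      ring
    obtain ⟨m, hm⟩ := hdvd
    refine ⟨x + (p:ℤ)^(s+1) * w, ?_⟩
    have key : (x + (p:ℤ)^(s+1) * w)^2 - a
        = (p:ℤ)^(s+2) * m + ((p:ℤ)^(s+1))^2 * w^2 := by
      have e1 : (x + (p:ℤ)^(s+1) * w)^2 - a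
          = (x^2 - a) + (p:ℤ)^(s+1) * (2*x*w) + ((p:ℤ)^(s+1))^2 * w^2 := by ring
      rw [e1, hk]
      have e2 : (p:ℤ)^(s+1) * k + (p:ℤ)^(s+1) * (2*x*w)
          = (p:ℤ)^(s+1) * (2*x*w + k) := by ring
      rw [e2, hm]; ring
    rw [key]
    refine dvd_add ⟨m, by ring⟩ (Dvd.dvd.mul_right ?_ _)
    rw [← pow_mul]
    exact pow_dvd_pow _ (by omega)

/-- the reduction map -/
noncomputable def redmap (p t : ℕ) (ht : 1 ≤ t) : ZMod (p ^ t) →+* ZMod p :=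
  ZMod.castHom (dvd_pow_self p (by omega : t ≠ 0)) (ZMod p)

lemma redmap_natCast (p t : ℕ) [hp : Fact p.Prime] (ht : 1 ≤ t) (x : ZMod (p ^ t)) :
    ((x.val : ℕ) : ZMod p) = redmap p t ht x := by
  haveI : NeZero (p ^ t) := ⟨pow_ne_zero t hp.out.ne_zero⟩
  rw [ZMod.natCast_val, redmap, ZMod.castHom_apply]

lemma isUnit_iff_red (p : ℕ) [hp : Fact p.Prime] (t : ℕ) (ht : 1 ≤ t)
    (x : ZMod (p ^ t)) : IsUnit x ↔ redmap p t ht x ≠ 0 := by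
  haveI : NeZero (p ^ t) := ⟨pow_ne_zero t hp.out.ne_zero⟩
  haveI : Fact (1 < p ^ t) :=
    ⟨Nat.one_lt_pow (by omega) hp.out.one_lt⟩
  constructor
  · intro hx h0
    have : IsUnit (redmap p t ht x) := hx.map _
    rw [h0] at this
    exact not_isUnit_zero this
  · intro hx
    have hpv : ¬ p ∣ x.val := fun hd =>
      hx (by rw [← redmap_natCast p t ht];
             exact (ZMod.natCast_eq_zero_iff _ _).mpr hd)
    have hco : Nat.Coprime x.val (p ^ t) :=
      Nat.Coprime.pow_right t ((Nat.Prime.coprime_iff_not_dvd hp.out).mpr hpv).symm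
    have := (ZMod.isUnit_iff_coprime x.val (p ^ t)).mpr hco
    rwa [ZMod.natCast_val, ZMod.cast_id] at this

/-- units that are squares mod p have exactly two square roots `r, -r` mod `p^t`. -/
lemma two_roots (p : ℕ) [hp : Fact p.Prime] (hp2 : p ≠ 2) (t : ℕ) (ht : 1 ≤ t)
    (c : ZMod (p ^ t)) (hc : IsUnit c) (hsq : IsSquare (redmap p t ht c)) :
    ∃ r : ZMod (p ^ t), r ^ 2 = c ∧ r ≠ -r ∧
      ∀ x : ZMod (p ^ t), x ^ 2 = c ↔ (x = r ∨ x = -r) := by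
  haveI : NeZero (p ^ t) := ⟨pow_ne_zero t hp.out.ne_zero⟩
  haveI : Fact (1 < p ^ t) := ⟨Nat.one_lt_pow (by omega) hp.out.one_lt⟩
  have hφc : redmap p t ht c ≠ 0 := (isUnit_iff_red p t ht c).mp hc
  set a : ℤ := (c.val : ℤ) with ha_def
  have hac : ((a : ℤ) : ZMod (p ^ t)) = c := by
    rw [ha_def]; push_cast; rw [ZMod.natCast_val, ZMod.cast_id]
  have hacp : ((a : ℤ) : ZMod p) = redmap p t ht c := by
    rw [ha_def]; push_cast; exact redmap_natCast p t ht c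
  have hpa : ¬ (p : ℤ) ∣ a := by
    intro hd
    exact hφc (by rw [← hacp]; exact (ZMod.intCast_zmod_eq_zero_iff_dvd a p).mpr hd)
  have hex : ∃ x : ℤ, (p:ℤ) ∣ x ^ 2 - a := by
    obtain ⟨s, hs⟩ := hsq
    refine ⟨(s.val : ℤ), ?_⟩
    rw [← ZMod.intCast_zmod_eq_zero_iff_dvd]
    push_cast
    rw [ZMod.natCast_val, ZMod.cast_id, hacp, hs]
    ring
  obtain ⟨x, hx⟩ := sq_lift p hp2 a hpa hex (t - 1)
  rw [show t - 1 + 1 = t by omega] at hx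
  set r : ZMod (p ^ t) := ((x : ℤ) : ZMod (p ^ t)) with hr_def
  have hr2 : r ^ 2 = c := by
    have h0 : ((x ^ 2 - a : ℤ) : ZMod (p ^ t)) = 0 := by
      rw [ZMod.intCast_zmod_eq_zero_iff_dvd]
      exact_mod_cast hx
    push_cast at h0
    rw [sub_eq_zero] at h0
    rw [hr_def, h0, hac]
  have hrunit : IsUnit r := by
    have : IsUnit (r * r) := by rw [← sq, hr2]; exact hc
    exact isUnit_of_mul_isUnit_left this
  have h2r : IsUnit (2 * r) := by
    refine IsUnit.mul ?_ hrunit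
    rw [isUnit_iff_red p t ht, map_ofNat]
    exact my_two_ne_zero p hp2
  have hrne : r ≠ -r := by
    intro h
    have hrr : r + r = 0 := by
      nth_rewrite 2 [h]
      exact add_neg_cancel r
    have : (2 : ZMod (p ^ t)) * r = 0 := by rw [two_mul, hrr]
    rw [this] at h2r
    exact not_isUnit_zero h2r
  refine ⟨r, hr2, hrne, fun y => ⟨fun hy => ?_, fun hy => ?_⟩⟩
  · have hfac : (y - r) * (y + r) = 0 := by
      calc (y - r) * (y + r) = y ^ 2 - r ^ 2 := by ring
        _ = 0 := by rw [hy, hr2]; ring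
    by_cases h1 : IsUnit (y - r)
    · right
      have := (h1.mul_right_eq_zero).mp hfac
      exact eq_neg_of_add_eq_zero_left this
    · by_cases h2 : IsUnit (y + r)
      · left
        rw [mul_comm] at hfac
        exact sub_eq_zero.mp ((h2.mul_right_eq_zero).mp hfac)
      · exfalso
        rw [isUnit_iff_red p t ht, not_not] at h1 h2
        have h0 : redmap p t ht (2 * r) = 0 := by
          have e : (2 : ZMod (p^t)) * r = (y + r) - (y - r) := by ring
          rw [e, map_sub, h1, h2, sub_zero]
        exact ((isUnit_iff_red p t ht _).mp h2r) h0
  · rcases hy with h | h <;> rw [h]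
    · exact hr2
    · rw [neg_pow]; simp [hr2]

theorem local_count_unit (p : ℕ) [Fact p.Prime] (hp : p ≠ 2) (u : ℤ)
    (hu : legendreSym p (-u) = -1) (n : ℤ) (hn : ¬ ((p : ℤ) ∣ n))
    (t : ℕ) (ht : 1 ≤ t) :
    (cnt p t u n : ℤ) = (p : ℤ) ^ (2 * t) * (1 - legendreSym p (-n)) := by
  haveI hpf : Fact p.Prime := inferInstance
  haveI : NeZero (p ^ t) := ⟨pow_ne_zero t hpf.out.ne_zero⟩
  have hup : ((u : ℤ) : ZMod p) ≠ 0 := by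
    intro h
    have h0 : ((-u : ℤ) : ZMod p) = 0 := by push_cast; rw [h]; ring
    rw [← legendreSym.eq_zero_iff] at h0
    rw [h0] at hu; norm_num at hu
  have hnp : ((n : ℤ) : ZMod p) ≠ 0 := fun h =>
    hn ((ZMod.intCast_zmod_eq_zero_iff_dvd n p).mp h)
  have hnegn : ((-n : ℤ) : ZMod p) ≠ 0 := by
    push_cast; simpa using hnp
  have hun : legendreSym p (u * n) = - legendreSym p (-n) := by
    have e : u * n = (-u) * (-n) := by ring
    rw [e, legendreSym.mul, hu]; ring
  have hunne : ((u * n : ℤ) : ZMod p) ≠ 0 := by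
    push_cast; exact mul_ne_zero hup hnp
  rcases legendreSym.eq_one_or_neg_one p hnegn with hL | hL
  · -- no solutions
    have hempty : ∀ v : ZMod (p ^ t) × ZMod (p ^ t) × ZMod (p ^ t),
        ¬ ((u : ZMod (p ^ t)) * v.1 ^ 2 + (p : ZMod (p ^ t)) * v.2.1 ^ 2 +
            (p : ZMod (p ^ t)) * (u : ZMod (p ^ t)) * v.2.2 ^ 2 = (n : ZMod (p ^ t))) := by
      rintro ⟨x, y, z⟩ hv
      apply_fun (redmap p t ht) at hv
      simp only [map_add, map_mul, map_pow, map_intCast, map_natCast,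
        ZMod.natCast_self, zero_mul, add_zero, mul_zero] at hv
      have hsq : IsSquare ((u * n : ℤ) : ZMod p) := by
        refine ⟨(u : ZMod p) * redmap p t ht x, ?_⟩
        push_cast
        rw [← hv]; ring
      have h1 := (legendreSym.eq_one_iff p hunne).mpr hsq
      rw [hun, hL] at h1; norm_num at h1
    have hzero : cnt p t u n = 0 := by
      unfold cnt
      haveI : IsEmpty {v : ZMod (p ^ t) × ZMod (p ^ t) × ZMod (p ^ t) |
          (u : ZMod (p ^ t)) * v.1 ^ 2 + (p : ZMod (p ^ t)) * v.2.1 ^ 2 +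
            (p : ZMod (p ^ t)) * (u : ZMod (p ^ t)) * v.2.2 ^ 2 = (n : ZMod (p ^ t))} := by
        rw [Set.isEmpty_coe_sort, Set.eq_empty_iff_forall_notMem]
        exact hempty
      exact Nat.card_of_isEmpty
    rw [hzero, hL]; ring
  · -- exactly 2 p^(2t) solutions
    have hun1 : legendreSym p (u * n) = 1 := by rw [hun, hL]; ring
    have huR : IsUnit ((u : ℤ) : ZMod (p ^ t)) := by
      rw [isUnit_iff_red p t ht, map_intCast]
      exact hup
    have hui : ((u : ℤ) : ZMod (p ^ t))⁻¹ * ((u : ℤ) : ZMod (p ^ t)) = 1 :=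
      ZMod.inv_mul_of_unit _ huR
    have hroots : ∀ y z : ZMod (p ^ t), ∃ r : ZMod (p ^ t),
        r ^ 2 = ((u : ℤ) : ZMod (p ^ t))⁻¹ * ((n : ZMod (p ^ t))
          - (p : ZMod (p ^ t)) * y ^ 2
          - (p : ZMod (p ^ t)) * (u : ZMod (p ^ t)) * z ^ 2) ∧ r ≠ -r ∧
        ∀ x : ZMod (p ^ t), x ^ 2 = ((u : ℤ) : ZMod (p ^ t))⁻¹ * ((n : ZMod (p ^ t))
          - (p : ZMod (p ^ t)) * y ^ 2
          - (p : ZMod (p ^ t)) * (u : ZMod (p ^ t)) * z ^ 2) ↔ (x = r ∨ x = -r) := by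
      intro y z
      set cc : ZMod (p ^ t) := ((u : ℤ) : ZMod (p ^ t))⁻¹ * ((n : ZMod (p ^ t))
          - (p : ZMod (p ^ t)) * y ^ 2
          - (p : ZMod (p ^ t)) * (u : ZMod (p ^ t)) * z ^ 2) with hcc
      set iu : ZMod p := redmap p t ht (((u : ℤ) : ZMod (p ^ t))⁻¹) with hiu_def
      have hiu : (u : ZMod p) * iu = 1 := by
        rw [hiu_def, ← map_intCast (redmap p t ht) u, ← map_mul,
          ZMod.mul_inv_of_unit _ huR, map_one]
      have hiune : iu ≠ 0 := by
        intro h0; rw [h0, mul_zero] at hiu; exact zero_ne_one hiu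
      have hφc : redmap p t ht cc = iu * (n : ZMod p) := by
        rw [hcc]
        simp only [map_mul, map_sub, map_pow, map_intCast, map_natCast,
          ZMod.natCast_self, zero_mul, sub_zero, mul_zero, hiu_def]
      have hcunit : IsUnit cc := by
        rw [isUnit_iff_red p t ht, hφc]
        exact mul_ne_zero hiune hnp
      have hcsq : IsSquare (redmap p t ht cc) := by
        obtain ⟨s, hs⟩ := (legendreSym.eq_one_iff p hunne).mp hun1
        have hs' : (u : ZMod p) * (n : ZMod p) = s * s := by push_cast at hs; exact hs
        refine ⟨iu * s, ?_⟩
        rw [hφc]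
        linear_combination (iu * iu) * hs' - iu * (n : ZMod p) * hiu
      exact two_roots p hp t ht cc hcunit hcsq
    choose r hr1 hr2 hr3 using hroots
    have hEq : ∀ x y z : ZMod (p ^ t),
        ((u : ZMod (p ^ t)) * x ^ 2 + (p : ZMod (p ^ t)) * y ^ 2 +
          (p : ZMod (p ^ t)) * (u : ZMod (p ^ t)) * z ^ 2 = (n : ZMod (p ^ t)))
          ↔ (x = r y z ∨ x = -r y z) := by
      intro x y z
      rw [← hr3 y z x]
      constructor
      · intro h
        have hd : (u : ZMod (p ^ t)) * x ^ 2 = (n : ZMod (p ^ t))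
            - (p : ZMod (p ^ t)) * y ^ 2
            - (p : ZMod (p ^ t)) * (u : ZMod (p ^ t)) * z ^ 2 := by
          linear_combination h
        calc x ^ 2 = (((u : ℤ) : ZMod (p ^ t))⁻¹ * ((u : ℤ) : ZMod (p ^ t))) * x ^ 2 := by
              rw [hui]; ring
          _ = ((u : ℤ) : ZMod (p ^ t))⁻¹ * ((u : ZMod (p ^ t)) * x ^ 2) := by ring
          _ = _ := by rw [hd]
      · intro h
        have hd : (u : ZMod (p ^ t)) * x ^ 2 = (n : ZMod (p ^ t))
            - (p : ZMod (p ^ t)) * y ^ 2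
            - (p : ZMod (p ^ t)) * (u : ZMod (p ^ t)) * z ^ 2 := by
          rw [h]
          calc (u : ZMod (p ^ t)) * (((u : ℤ) : ZMod (p ^ t))⁻¹ * ((n : ZMod (p ^ t))
                - (p : ZMod (p ^ t)) * y ^ 2
                - (p : ZMod (p ^ t)) * (u : ZMod (p ^ t)) * z ^ 2))
              = (((u : ℤ) : ZMod (p ^ t))⁻¹ * ((u : ℤ) : ZMod (p ^ t))) * ((n : ZMod (p ^ t))
                - (p : ZMod (p ^ t)) * y ^ 2
                - (p : ZMod (p ^ t)) * (u : ZMod (p ^ t)) * z ^ 2) := by ring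
            _ = _ := by rw [hui]; ring
        linear_combination hd
    have hcard : cnt p t u n = 2 * (p ^ t * p ^ t) := by
      unfold cnt
      have e : {v : ZMod (p ^ t) × ZMod (p ^ t) × ZMod (p ^ t) |
          (u : ZMod (p ^ t)) * v.1 ^ 2 + (p : ZMod (p ^ t)) * v.2.1 ^ 2 +
            (p : ZMod (p ^ t)) * (u : ZMod (p ^ t)) * v.2.2 ^ 2 = (n : ZMod (p ^ t))}
          ≃ Bool × ZMod (p ^ t) × ZMod (p ^ t) :=
        { toFun := fun v => (decide (v.1.1 = r v.1.2.1 v.1.2.2), v.1.2.1, v.1.2.2)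
          invFun := fun b =>
            ⟨(if b.1 then r b.2.1 b.2.2 else -r b.2.1 b.2.2, b.2.1, b.2.2), by
              rcases b with ⟨b, y, z⟩
              have h := hEq (if b then r y z else -r y z) y z
              simp only [Set.mem_setOf_eq]
              rw [h]
              cases b
              · right; simp
              · left; simp⟩
          left_inv := by
            rintro ⟨⟨x, y, z⟩, hv⟩
            apply Subtype.ext
            rcases (hEq x y z).mp hv with h | h
            · simp [h]
            · have hne : x ≠ r y z := by
                rw [h]; intro h2; exact hr2 y z h2.symm
              simp only [decide_eq_false hne, Bool.false_eq_true, if_false]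
              rw [h]
          right_inv := by
            rintro ⟨b, y, z⟩
            cases b
            · have hne : -r y z ≠ r y z := fun h2 => hr2 y z h2.symm
              simp [hne]
            · simp }
      rw [Nat.card_congr e, Nat.card_prod, Nat.card_prod]
      simp [Nat.card_eq_fintype_card, ZMod.card]
    rw [hcard, hL]
    push_cast
    ring
end

section
/- Let p be an odd prime and u an integer with Legendre symbol (−u | p) = −1. Let n = p·m with m an integer not divisible by p. Then for every integer t ≥ 2, the number of triples (x,y,z) ∈ (ℤ/p^tℤ)³ with u·x² + p·y² + p·u·z² = n equals p^{2t} + p^{2t−1}. -/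
open Finset

namespace LocalCnt

variable {p : ℕ} [hp : Fact p.Prime]

lemma ppos : 0 < p := (Fact.out : p.Prime).pos

instance instNeZeroPow {s : ℕ} : NeZero (p ^ s) := ⟨pow_ne_zero s (Fact.out : p.Prime).ne_zero⟩

/-! ### Character sum lemmas -/

lemma sum_quadChar_sq_add (hp2 : p ≠ 2) (b : ZMod p) (hb : b ≠ 0) :
    ∑ z : ZMod p, quadraticChar (ZMod p) (z ^ 2 + b) = -1 := by
  have hc : ringChar (ZMod p) ≠ 2 := (ZMod.ringChar_zmod_n p).symm ▸ hp2
  set χ := quadraticChar (ZMod p)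
  have step1 : ∑ z : ZMod p, χ (z ^ 2 + b) = ∑ w : ZMod p, (χ w + 1) * χ (w + b) := by
    rw [← Finset.sum_fiberwise_of_maps_to (g := fun z : ZMod p => z ^ 2)
      (fun x _ => mem_univ _)]
    refine Finset.sum_congr rfl fun w _ => ?_
    have : ∑ z ∈ univ.filter (fun z : ZMod p => z ^ 2 = w), χ (z ^ 2 + b)
        = ∑ z ∈ univ.filter (fun z : ZMod p => z ^ 2 = w), χ (w + b) := by
      refine Finset.sum_congr rfl fun z hz => ?_
      rw [(Finset.mem_filter.mp hz).2]
    rw [this, Finset.sum_const, nsmul_eq_mul]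
    congr 1
    have := quadraticChar_card_sqrts hc w
    rw [← this]
    congr 1
    rw [Set.toFinset_setOf]
  rw [step1]
  have step2 : ∑ w : ZMod p, (χ w + 1) * χ (w + b)
      = (∑ w : ZMod p, χ w * χ (w + b)) + ∑ w : ZMod p, χ (w + b) := by
    rw [← Finset.sum_add_distrib]; refine Finset.sum_congr rfl fun w _ => ?_; ring
  have step3 : ∑ w : ZMod p, χ (w + b) = 0 := by
    have h3 := Fintype.sum_bijective (fun w : ZMod p => w + b) (Equiv.addRight b).bijective
      (fun w => χ (w + b)) (fun w => χ w) (fun w => rfl)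
    rw [h3]
    exact quadraticChar_sum_zero hc
  rw [step2, step3, add_zero]
  have step4 : ∀ w : ZMod p, w ≠ 0 → χ w * χ (w + b) = χ (1 + b * w⁻¹) := by
    intro w hw
    rw [← map_mul]
    have h1 : w * (w + b) = w ^ 2 * (1 + b * w⁻¹) := by field_simp
    rw [h1, map_mul, quadraticChar_sq_one' hw, one_mul]
  rw [← Finset.sum_erase_add _ _ (mem_univ (0 : ZMod p))]
  rw [show χ 0 * χ (0 + b) = 0 by rw [quadraticChar_zero]; ring, add_zero]
  have step5 : ∑ w ∈ univ.erase (0 : ZMod p), χ w * χ (w + b)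
      = ∑ v ∈ univ.erase (1 : ZMod p), χ v := by
    refine Finset.sum_nbij' (fun w => 1 + b * w⁻¹) (fun v => b * (v - 1)⁻¹) ?_ ?_ ?_ ?_ ?_
    · intro w hw
      have hw0 : w ≠ 0 := (Finset.mem_erase.mp hw).1
      simp only [mem_erase, mem_univ, and_true]
      intro h
      have : b * w⁻¹ = 0 := by linear_combination h
      rcases mul_eq_zero.mp this with h' | h'
      · exact hb h'
      · exact hw0 (inv_eq_zero.mp h')
    · intro v hv
      have hv1 : v ≠ 1 := (Finset.mem_erase.mp hv).1
      simp only [mem_erase, mem_univ, and_true]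
      intro h
      rcases mul_eq_zero.mp h with h' | h'
      · exact hb h'
      · exact hv1 (by have := inv_eq_zero.mp h'; linear_combination this)
    · intro w hw
      have hw0 : w ≠ 0 := (Finset.mem_erase.mp hw).1
      show b * ((1 + b * w⁻¹) - 1)⁻¹ = w
      have h1 : (1 : ZMod p) + b * w⁻¹ - 1 = b * w⁻¹ := by ring
      rw [h1]
      field_simp
    · intro v hv
      have hv1 : v ≠ 1 := (Finset.mem_erase.mp hv).1
      have hv1' : v - 1 ≠ 0 := sub_ne_zero.mpr hv1
      show (1 : ZMod p) + b * (b * (v - 1)⁻¹)⁻¹ = v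
      field_simp
      ring
    · intro w hw
      exact step4 w (Finset.mem_erase.mp hw).1
  rw [step5, Finset.sum_erase_eq_sub (mem_univ _), quadraticChar_sum_zero hc, map_one]
  ring

lemma pair_count (hp2 : p ≠ 2) (u c : ZMod p)
    (hu : quadraticChar (ZMod p) (-u) = -1) (hc : c ≠ 0) :
    (((univ : Finset (ZMod p × ZMod p)).filter
      (fun w => w.1 ^ 2 + u * w.2 ^ 2 = c)).card : ℤ) = p + 1 := by
  have hu0 : u ≠ 0 := by
    intro h; rw [h, neg_zero, quadraticChar_zero] at hu; norm_num at hu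
  set χ := quadraticChar (ZMod p)
  have h1 : (((univ : Finset (ZMod p × ZMod p)).filter
      (fun w => w.1 ^ 2 + u * w.2 ^ 2 = c)).card : ℤ)
      = ∑ w : ZMod p × ZMod p, if w.1 ^ 2 + u * w.2 ^ 2 = c then (1 : ℤ) else 0 := by
    rw [Finset.sum_boole]
  rw [h1, Fintype.sum_prod_type_right]
  have h2 : ∀ z : ZMod p, (∑ y : ZMod p, if y ^ 2 + u * z ^ 2 = c then (1 : ℤ) else 0)
      = χ (c - u * z ^ 2) + 1 := by
    intro z
    have h3 : (∑ y : ZMod p, if y ^ 2 + u * z ^ 2 = c then (1 : ℤ) else 0)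
        = ((univ.filter (fun y : ZMod p => y ^ 2 = c - u * z ^ 2)).card : ℤ) := by
      rw [Finset.sum_boole]
      have he : (univ.filter (fun y : ZMod p => y ^ 2 + u * z ^ 2 = c))
          = univ.filter (fun y : ZMod p => y ^ 2 = c - u * z ^ 2) := by
        apply Finset.filter_congr
        intro y _
        constructor
        · intro h; linear_combination h
        · intro h; linear_combination h
      rw [he]
    rw [h3, ← quadraticChar_card_sqrts ((ZMod.ringChar_zmod_n p).symm ▸ hp2) (c - u * z ^ 2)]
    congr 2
    rw [Set.toFinset_setOf]
  have h4 : ∀ z : ZMod p, χ (c - u * z ^ 2) = χ (-u) * χ (z ^ 2 + (-c * u⁻¹)) := by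
    intro z
    rw [← map_mul]
    congr 1
    field_simp
    ring
  calc ∑ z : ZMod p, (∑ y : ZMod p, if y ^ 2 + u * z ^ 2 = c then (1 : ℤ) else 0)
      = ∑ z : ZMod p, (χ (c - u * z ^ 2) + 1) := by
        exact Finset.sum_congr rfl fun z _ => h2 z
    _ = (∑ z : ZMod p, χ (z ^ 2 + (-c * u⁻¹))) * χ (-u) + p := by
        rw [Finset.sum_add_distrib, Finset.sum_const]
        simp only [card_univ, ZMod.card, nsmul_eq_mul, mul_one]
        rw [Finset.sum_mul]
        congr 1
        exact Finset.sum_congr rfl fun z _ => by rw [h4 z]; ring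
    _ = p + 1 := by
        rw [sum_quadChar_sq_add hp2 (-c * u⁻¹) (by
          simp only [neg_mul, neg_ne_zero]
          exact mul_ne_zero hc (inv_ne_zero hu0)), hu]
        ring

/-! ### Lifting infrastructure -/

/-- lift `w : ZMod (p^s)` to `ZMod (p^(s+1))` with top digit `a`. -/
def lift1 (s : ℕ) (w : ZMod (p ^ s)) (a : ZMod p) : ZMod (p ^ (s + 1)) :=
  ((w.val + p ^ s * a.val : ℕ) : ZMod (p ^ (s + 1)))

/-- lift `w : ZMod (p^s)` to `p·w : ZMod (p^(s+1))`. -/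
def lift2 (s : ℕ) (w : ZMod (p ^ s)) : ZMod (p ^ (s + 1)) :=
  ((p * w.val : ℕ) : ZMod (p ^ (s + 1)))

/-- top digit of `w : ZMod (p^(s+1))`. -/
def dig (s : ℕ) (w : ZMod (p ^ (s + 1))) : ZMod p :=
  ((w.val / p ^ s : ℕ) : ZMod p)

lemma lift1_val (s : ℕ) (w : ZMod (p ^ s)) (a : ZMod p) :
    (lift1 s w a).val = w.val + p ^ s * a.val := by
  have h1 : w.val < p ^ s := ZMod.val_lt w
  have h2 : a.val < p := ZMod.val_lt a
  have h3 : w.val + p ^ s * a.val < p ^ (s + 1) := by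
    have hps : 0 < p ^ s := pow_pos ppos s
    rw [pow_succ]
    nlinarith
  rw [lift1, ZMod.val_natCast_of_lt h3]

lemma castdown_lift1 (s : ℕ) (w : ZMod (p ^ s)) (a : ZMod p) :
    (((lift1 s w a).val : ℕ) : ZMod (p ^ s)) = w := by
  rw [lift1_val]
  push_cast
  rw [show ((p : ZMod (p ^ s))) ^ s = 0 by rw [← Nat.cast_pow, ZMod.natCast_self]]
  simp [ZMod.natCast_val, ZMod.cast_id]

lemma dig_lift1 (s : ℕ) (w : ZMod (p ^ s)) (a : ZMod p) :
    dig s (lift1 s w a) = a := by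
  rw [dig, lift1_val]
  have h1 : (w.val + p ^ s * a.val) / p ^ s = a.val := by
    rw [Nat.add_mul_div_left _ _ (pow_pos ppos s), Nat.div_eq_of_lt (ZMod.val_lt w), zero_add]
  rw [h1]
  simp [ZMod.natCast_val, ZMod.cast_id]

lemma lift1_self (s : ℕ) (w : ZMod (p ^ (s + 1))) :
    lift1 s ((w.val : ZMod (p ^ s))) (dig s w) = w := by
  have h1 : ((w.val : ZMod (p ^ s))).val = w.val % p ^ s := ZMod.val_natCast _ _
  have h2 : (dig s w).val = w.val / p ^ s := by
    rw [dig, ZMod.val_natCast, Nat.mod_eq_of_lt]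
    rw [Nat.div_lt_iff_lt_mul (pow_pos ppos s)]
    calc w.val < p ^ (s + 1) := ZMod.val_lt w
    _ = p * p ^ s := by ring
  rw [lift1, h1, h2, Nat.mod_add_div]
  simp [ZMod.natCast_val, ZMod.cast_id]

lemma lift1_expand (s : ℕ) (w : ZMod (p ^ s)) (a : ZMod p) :
    lift1 s w a = ((w.val : ℕ) : ZMod (p ^ (s + 1)))
      + (p : ZMod (p ^ (s + 1))) ^ s * ((a.val : ℕ) : ZMod (p ^ (s + 1))) := by
  rw [lift1]
  push_cast
  ring

lemma lift2_val (s : ℕ) (w : ZMod (p ^ s)) :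
    (lift2 s w).val = p * w.val := by
  have h1 : w.val < p ^ s := ZMod.val_lt w
  have h3 : p * w.val < p ^ (s + 1) := by
    rw [pow_succ, mul_comm (p ^ s) p]
    exact (Nat.mul_lt_mul_left ppos).mpr h1
  rw [lift2, ZMod.val_natCast_of_lt h3]

lemma lift2_expand (s : ℕ) (w : ZMod (p ^ s)) :
    lift2 s w = (p : ZMod (p ^ (s + 1))) * ((w.val : ℕ) : ZMod (p ^ (s + 1))) := by
  rw [lift2]
  push_cast
  ring

lemma div_lift2 (s : ℕ) (w : ZMod (p ^ s)) :
    (((lift2 s w).val / p : ℕ) : ZMod (p ^ s)) = w := by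
  rw [lift2_val, Nat.mul_div_cancel_left _ ppos]
  simp [ZMod.natCast_val, ZMod.cast_id]

lemma lift2_of_dvd (s : ℕ) (x : ZMod (p ^ (s + 1))) (hx : p ∣ x.val) :
    lift2 s (((x.val / p : ℕ) : ZMod (p ^ s))) = x := by
  have hlt : x.val / p < p ^ s := by
    rw [Nat.div_lt_iff_lt_mul ppos]
    calc x.val < p ^ (s + 1) := ZMod.val_lt x
    _ = p ^ s * p := pow_succ p s
  rw [lift2, ZMod.val_natCast_of_lt hlt, Nat.mul_div_cancel' hx]
  simp [ZMod.natCast_val, ZMod.cast_id]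

lemma mul_cancel_iff {N d q : ℕ} (hN : N = d * q) (hd : 0 < d) (hq : 0 < q)
    (a b : ZMod N) :
    (d : ZMod N) * a = (d : ZMod N) * b ↔ ((a.val : ℕ) : ZMod q) = ((b.val : ℕ) : ZMod q) := by
  subst hN
  haveI : NeZero (d * q) := ⟨by positivity⟩
  conv_lhs => rw [show a = ((a.val : ℕ) : ZMod (d * q)) by simp [ZMod.natCast_val, ZMod.cast_id],
    show b = ((b.val : ℕ) : ZMod (d * q)) by simp [ZMod.natCast_val, ZMod.cast_id]]
  rw [← Nat.cast_mul, ← Nat.cast_mul, ZMod.natCast_eq_natCast_iff, ZMod.natCast_eq_natCast_iff,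
    Nat.modEq_iff_dvd, Nat.modEq_iff_dvd]
  push_cast
  constructor
  · intro h
    have h2 : (d : ℤ) * q ∣ d * (b.val - a.val) := by
      convert h using 1; ring
    exact (mul_dvd_mul_iff_left (by exact_mod_cast hd.ne' : (d:ℤ) ≠ 0)).mp h2
  · intro h
    have h2 : (d : ℤ) * q ∣ d * (b.val - a.val) := mul_dvd_mul_left _ h
    convert h2 using 1; ring

lemma exists_dig {N d q : ℕ} (hN : N = d * q) (hd : 0 < d) (hq : 0 < q)
    (w : ZMod N) (hw : d ∣ w.val) :
    ∃ e : ZMod q, w = (d : ZMod N) * ((e.val : ℕ) : ZMod N) := by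
  subst hN
  haveI : NeZero (d * q) := ⟨by positivity⟩
  refine ⟨((w.val / d : ℕ) : ZMod q), ?_⟩
  have hlt : w.val / d < q := by
    rw [Nat.div_lt_iff_lt_mul hd]
    calc w.val < d * q := ZMod.val_lt w
    _ = q * d := by ring
  rw [ZMod.val_natCast_of_lt hlt, ← Nat.cast_mul, Nat.mul_div_cancel' hw]
  simp [ZMod.natCast_val, ZMod.cast_id]

lemma valCast_eq_castHom {N q : ℕ} [NeZero N] (h : q ∣ N) (a : ZMod N) :
    ((a.val : ℕ) : ZMod q) = ZMod.castHom h (ZMod q) a := by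
  rw [ZMod.castHom_apply, ZMod.natCast_val]

/-! ### Linear equation count -/

lemma lin_count (α β e : ZMod p) (h : α ≠ 0 ∨ β ≠ 0) :
    (((univ : Finset (ZMod p × ZMod p × ZMod p))).filter
      (fun w => α * w.2.1 + β * w.2.2 = e)).card = p ^ 2 := by
  have hcard : (univ : Finset (ZMod p × ZMod p)).card = p ^ 2 := by
    simp [Finset.card_univ, ZMod.card]; ring
  rw [← hcard]
  rcases h with hα | hβ
  · apply Finset.card_nbij' (fun w => (w.1, w.2.2))
      (fun v => (v.1, α⁻¹ * (e - β * v.2), v.2))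
    · intro a _; exact mem_univ _
    · intro v _
      simp only [mem_coe, mem_filter, mem_univ, true_and]
      field_simp
      ring
    · intro w hw
      obtain ⟨a, b, c⟩ := w
      simp only [mem_coe, mem_filter, mem_univ, true_and] at hw
      simp only [Prod.mk.injEq]
      refine ⟨trivial, ?_, trivial⟩
      field_simp
      linear_combination -hw
    · intro v _; rfl
  · apply Finset.card_nbij' (fun w => (w.1, w.2.1))
      (fun v => (v.1, v.2, β⁻¹ * (e - α * v.2)))
    · intro a _; exact mem_univ _
    · intro v _
      simp only [mem_coe, mem_filter, mem_univ, true_and]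
      field_simp
      ring
    · intro w hw
      obtain ⟨a, b, c⟩ := w
      simp only [mem_coe, mem_filter, mem_univ, true_and] at hw
      simp only [Prod.mk.injEq]
      refine ⟨trivial, trivial, ?_⟩
      field_simp
      linear_combination -hw
    · intro v _; rfl

/-! ### The solution sets -/

/-- solutions of `p·u·x² + y² + u·z² = m` in `ZMod (p^s)`. -/
def solsF (u m : ℤ) (s : ℕ) : Finset (ZMod (p ^ s) × ZMod (p ^ s) × ZMod (p ^ s)) :=
  Finset.univ.filter fun v =>
    (p : ZMod (p ^ s)) * (u : ZMod (p ^ s)) * v.1 ^ 2 + v.2.1 ^ 2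
      + (u : ZMod (p ^ s)) * v.2.2 ^ 2 = (m : ZMod (p ^ s))

lemma pow_succ_zero (s : ℕ) : (p : ZMod (p ^ (s + 1))) ^ (s + 1) = 0 := by
  rw [← Nat.cast_pow, ZMod.natCast_self]

lemma hP1_lem (s : ℕ) : (p : ZMod (p ^ (s + 1))) * (p : ZMod (p ^ (s + 1))) ^ s = 0 := by
  rw [← pow_succ', pow_succ_zero]

lemma hPP_lem (s : ℕ) (hs : 1 ≤ s) :
    (p : ZMod (p ^ (s + 1))) ^ s * (p : ZMod (p ^ (s + 1))) ^ s = 0 := by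
  have h : (p : ZMod (p ^ (s + 1))) ^ s * (p : ZMod (p ^ (s + 1))) ^ s
      = (p : ZMod (p ^ (s + 1))) ^ (s + 1) * (p : ZMod (p ^ (s + 1))) ^ (s - 1) := by
    rw [← pow_add, ← pow_add]
    congr 1
    omega
  rw [h, pow_succ_zero, zero_mul]


/-! ### The Hensel step -/

lemma card_step (u m : ℤ) (hp2 : p ≠ 2)
    (hu : quadraticChar (ZMod p) (-(u : ZMod p)) = -1)
    (hm : ¬ ((p : ℤ) ∣ m)) (s : ℕ) (hs : 1 ≤ s) :
    (solsF (p := p) u m (s + 1)).card = p ^ 2 * (solsF (p := p) u m s).card := by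
  have hdvd1 : p ^ s ∣ p ^ (s + 1) := pow_dvd_pow p (Nat.le_succ s)
  have hdvdp : p ∣ p ^ (s + 1) := dvd_pow_self p (Nat.succ_ne_zero s)
  have hdvdps : p ∣ p ^ s := dvd_pow_self p (by omega)
  set φ := ZMod.castHom hdvdps (ZMod p) with hφ
  set π : (ZMod (p ^ (s+1)) × ZMod (p ^ (s+1)) × ZMod (p ^ (s+1))) →
      (ZMod (p ^ s) × ZMod (p ^ s) × ZMod (p ^ s)) :=
    fun v => (((v.1.val : ℕ) : ZMod (p ^ s)), ((v.2.1.val : ℕ) : ZMod (p ^ s)),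
      ((v.2.2.val : ℕ) : ZMod (p ^ s))) with hπ
  have hval : ∀ w : ZMod (p ^ s), ((w.val : ℕ) : ZMod (p ^ s)) = w := fun w => by
    simp [ZMod.natCast_val, ZMod.cast_id]
  have h_maps : ∀ v ∈ solsF (p := p) u m (s + 1), π v ∈ solsF (p := p) u m s := by
    intro v hv
    simp only [solsF, mem_filter, mem_univ, true_and] at hv ⊢
    have h2 := congrArg (ZMod.castHom hdvd1 (ZMod (p ^ s))) hv
    simp only [map_add, map_mul, map_pow, map_intCast, map_natCast] at h2
    simp only [hπ]
    rw [valCast_eq_castHom hdvd1, valCast_eq_castHom hdvd1, valCast_eq_castHom hdvd1]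
    exact h2
  rw [Finset.card_eq_sum_card_fiberwise h_maps]
  have hfib : ∀ v₀ ∈ solsF (p := p) u m s,
      ((solsF (p := p) u m (s + 1)).filter (fun v => π v = v₀)).card = p ^ 2 := by
    intro v₀ hv₀
    obtain ⟨x₀, y₀, z₀⟩ := v₀
    simp only [solsF, mem_filter, mem_univ, true_and] at hv₀
    have hmodp : (φ y₀) ^ 2 + (u : ZMod p) * (φ z₀) ^ 2 = (m : ZMod p) := by
      have h2 := congrArg φ hv₀
      simp only [map_add, map_mul, map_pow, map_intCast, map_natCast,
        ZMod.natCast_self, zero_mul] at h2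
      linear_combination h2
    have hm' : (m : ZMod p) ≠ 0 := fun h =>
      hm ((ZMod.intCast_zmod_eq_zero_iff_dvd m p).mp h)
    have hu0 : (u : ZMod p) ≠ 0 := by
      intro h
      rw [h, neg_zero, quadraticChar_zero] at hu
      norm_num at hu
    have h2ne : (2 : ZMod p) ≠ 0 := by
      have h2' : ((2 : ℕ) : ZMod p) ≠ 0 := by
        rw [Ne, ZMod.natCast_eq_zero_iff]
        intro hd
        exact hp2 ((Nat.prime_dvd_prime_iff_eq (Fact.out) Nat.prime_two).mp hd)
      exact_mod_cast h2'
    have hne : (2 * φ y₀ ≠ 0) ∨ (2 * (u : ZMod p) * φ z₀ ≠ 0) := by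
      by_contra hcon
      push_neg at hcon
      obtain ⟨h1, h2⟩ := hcon
      have hy : φ y₀ = 0 := by
        rcases mul_eq_zero.mp h1 with h | h
        · exact absurd h h2ne
        · exact h
      have hz : φ z₀ = 0 := by
        rcases mul_eq_zero.mp h2 with h | h
        · rcases mul_eq_zero.mp h with h' | h'
          · exact absurd h' h2ne
          · exact absurd h' hu0
        · exact h
      rw [hy, hz] at hmodp
      apply hm'
      linear_combination -hmodp
    have hN : p ^ (s + 1) = p ^ s * p := pow_succ p s
    set F : ZMod (p ^ (s + 1)) :=
      (p : ZMod (p ^ (s+1))) * (u : ZMod (p ^ (s+1))) * ((x₀.val : ℕ) : ZMod (p ^ (s+1))) ^ 2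
        + ((y₀.val : ℕ) : ZMod (p ^ (s+1))) ^ 2
        + (u : ZMod (p ^ (s+1))) * ((z₀.val : ℕ) : ZMod (p ^ (s+1))) ^ 2 with hF
    have hcastF : ZMod.castHom hdvd1 (ZMod (p ^ s)) ((m : ZMod (p ^ (s+1))) - F) = 0 := by
      simp only [hF, map_sub, map_add, map_mul, map_pow, map_intCast, map_natCast, hval]
      linear_combination -hv₀
    have hdvdF : p ^ s ∣ ((m : ZMod (p ^ (s+1))) - F).val := by
      rw [← ZMod.natCast_eq_zero_iff, valCast_eq_castHom hdvd1]
      exact hcastF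
    obtain ⟨e, he⟩ := exists_dig hN (pow_pos ppos s) ppos _ hdvdF
    rw [Nat.cast_pow] at he
    have hme : (m : ZMod (p ^ (s+1)))
        = F + (p : ZMod (p ^ (s+1))) ^ s * ((e.val : ℕ) : ZMod (p ^ (s+1))) := by
      linear_combination he
    have key : ∀ a b c : ZMod p,
        ((p : ZMod (p ^ (s+1))) * (u : ZMod (p ^ (s+1))) * (lift1 s x₀ a) ^ 2
          + (lift1 s y₀ b) ^ 2 + (u : ZMod (p ^ (s+1))) * (lift1 s z₀ c) ^ 2
          = (m : ZMod (p ^ (s+1))))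
        ↔ (2 * φ y₀ * b + 2 * (u : ZMod p) * φ z₀ * c = e) := by
      intro a b c
      have expand : (p : ZMod (p ^ (s+1))) * (u : ZMod (p ^ (s+1))) * (lift1 s x₀ a) ^ 2
          + (lift1 s y₀ b) ^ 2 + (u : ZMod (p ^ (s+1))) * (lift1 s z₀ c) ^ 2
          = F + (p : ZMod (p ^ (s+1))) ^ s *
            (2 * ((y₀.val : ℕ) : ZMod (p ^ (s+1))) * ((b.val : ℕ) : ZMod (p ^ (s+1)))
              + 2 * (u : ZMod (p ^ (s+1))) * ((z₀.val : ℕ) : ZMod (p ^ (s+1)))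
                * ((c.val : ℕ) : ZMod (p ^ (s+1))))  := by
        rw [lift1_expand, lift1_expand, lift1_expand, hF]
        linear_combination (2 * (u : ZMod (p ^ (s+1))) * ((x₀.val : ℕ) : ZMod (p ^ (s+1)))
            * ((a.val : ℕ) : ZMod (p ^ (s+1)))) * hP1_lem (p := p) s
          + ((u : ZMod (p ^ (s+1))) * ((a.val : ℕ) : ZMod (p ^ (s+1))) ^ 2
              * (p : ZMod (p ^ (s+1)))
            + ((b.val : ℕ) : ZMod (p ^ (s+1))) ^ 2
            + (u : ZMod (p ^ (s+1))) * ((c.val : ℕ) : ZMod (p ^ (s+1))) ^ 2) * hPP_lem (p := p) s hs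
      rw [expand, hme, add_right_inj, ← Nat.cast_pow]
      rw [mul_cancel_iff hN (pow_pos ppos s) ppos]
      rw [valCast_eq_castHom hdvdp, valCast_eq_castHom hdvdp]
      simp only [map_add, map_mul, map_natCast, map_ofNat, map_intCast]
      have hb : ((b.val : ℕ) : ZMod p) = b := by simp [ZMod.natCast_val, ZMod.cast_id]
      have hc : ((c.val : ℕ) : ZMod p) = c := by simp [ZMod.natCast_val, ZMod.cast_id]
      have he' : ((e.val : ℕ) : ZMod p) = e := by simp [ZMod.natCast_val, ZMod.cast_id]
      have hy' : ((y₀.val : ℕ) : ZMod p) = φ y₀ := valCast_eq_castHom hdvdps y₀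
      have hz' : ((z₀.val : ℕ) : ZMod p) = φ z₀ := valCast_eq_castHom hdvdps z₀
      rw [hb, hc, he', hy', hz']
    rw [← lin_count (2 * φ y₀) (2 * (u : ZMod p) * φ z₀) e hne]
    apply Finset.card_nbij' (fun v => (dig s v.1, dig s v.2.1, dig s v.2.2))
      (fun w => (lift1 s x₀ w.1, lift1 s y₀ w.2.1, lift1 s z₀ w.2.2))
    · intro v hv
      obtain ⟨v₁, v₂, v₃⟩ := v
      simp only [mem_coe, solsF, mem_filter, mem_univ, true_and] at hv
      obtain ⟨hveq, hvpi⟩ := hv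
      simp only [hπ, Prod.mk.injEq] at hvpi
      obtain ⟨h1, h2, h3⟩ := hvpi
      have e1 : lift1 s x₀ (dig s v₁) = v₁ := by rw [← h1]; exact lift1_self s v₁
      have e2 : lift1 s y₀ (dig s v₂) = v₂ := by rw [← h2]; exact lift1_self s v₂
      have e3 : lift1 s z₀ (dig s v₃) = v₃ := by rw [← h3]; exact lift1_self s v₃
      simp only [mem_coe, mem_filter, mem_univ, true_and]
      apply (key _ _ _).mp
      rw [e1, e2, e3]
      exact hveq
    · intro w hw
      simp only [mem_coe, mem_filter, mem_univ, true_and] at hw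
      simp only [mem_coe, solsF, mem_filter, mem_univ, true_and]
      refine ⟨(key w.1 w.2.1 w.2.2).mpr hw, ?_⟩
      simp only [hπ, Prod.mk.injEq]
      exact ⟨castdown_lift1 s x₀ w.1, castdown_lift1 s y₀ w.2.1, castdown_lift1 s z₀ w.2.2⟩
    · intro v hv
      obtain ⟨v₁, v₂, v₃⟩ := v
      simp only [mem_coe, solsF, mem_filter, mem_univ, true_and] at hv
      obtain ⟨hveq, hvpi⟩ := hv
      simp only [hπ, Prod.mk.injEq] at hvpi
      obtain ⟨h1, h2, h3⟩ := hvpi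
      simp only [Prod.mk.injEq]
      refine ⟨?_, ?_, ?_⟩
      · rw [← h1]; exact lift1_self s v₁
      · rw [← h2]; exact lift1_self s v₂
      · rw [← h3]; exact lift1_self s v₃
    · intro w hw
      obtain ⟨w₁, w₂, w₃⟩ := w
      simp only [Prod.mk.injEq]
      exact ⟨dig_lift1 s x₀ w₁, dig_lift1 s y₀ w₂, dig_lift1 s z₀ w₃⟩
  rw [Finset.sum_congr rfl hfib, Finset.sum_const, smul_eq_mul, mul_comm]


/-! ### Base case -/

lemma card_base (u m : ℤ) (hp2 : p ≠ 2)
    (hu : quadraticChar (ZMod p) (-(u : ZMod p)) = -1)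
    (hm : ¬ ((p : ℤ) ∣ m)) :
    ((solsF (p := p) u m 1).card : ℤ) = p * (p + 1) := by
  have hd1 : p ∣ p ^ 1 := dvd_pow_self p one_ne_zero
  have hd2 : p ^ 1 ∣ p := by rw [pow_one]
  have hm' : (m : ZMod p) ≠ 0 := fun h =>
    hm ((ZMod.intCast_zmod_eq_zero_iff_dvd m p).mp h)
  have hzero : (p : ZMod (p ^ 1)) = 0 := by
    rw [ZMod.natCast_eq_zero_iff]
    exact hd2
  have hcard : (solsF (p := p) u m 1).card
      = ((univ : Finset (ZMod p × ZMod p × ZMod p)).filter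
          (fun w => w.2.1 ^ 2 + (u : ZMod p) * w.2.2 ^ 2 = (m : ZMod p))).card := by
    apply Finset.card_nbij'
      (fun v => (((v.1.val : ℕ) : ZMod p), ((v.2.1.val : ℕ) : ZMod p), ((v.2.2.val : ℕ) : ZMod p)))
      (fun w => (((w.1.val : ℕ) : ZMod (p ^ 1)), ((w.2.1.val : ℕ) : ZMod (p ^ 1)),
        ((w.2.2.val : ℕ) : ZMod (p ^ 1))))
    · intro v hv
      simp only [mem_coe, solsF, mem_filter, mem_univ, true_and] at hv ⊢
      have h2 := congrArg (ZMod.castHom hd1 (ZMod p)) hv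
      simp only [map_add, map_mul, map_pow, map_intCast, map_natCast,
        ZMod.natCast_self, zero_mul] at h2
      rw [valCast_eq_castHom hd1, valCast_eq_castHom hd1]
      linear_combination h2
    · intro w hw
      simp only [mem_coe, mem_filter, mem_univ, true_and] at hw
      simp only [mem_coe, solsF, mem_filter, mem_univ, true_and]
      have h2 := congrArg (ZMod.castHom hd2 (ZMod (p ^ 1))) hw
      simp only [map_add, map_mul, map_pow, map_intCast, map_natCast] at h2
      rw [valCast_eq_castHom hd2, valCast_eq_castHom hd2, valCast_eq_castHom hd2, hzero]
      linear_combination h2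
    · intro v _
      obtain ⟨v₁, v₂, v₃⟩ := v
      have hb : ∀ x : ZMod (p ^ 1), ((((x.val : ℕ) : ZMod p)).val : ZMod (p ^ 1)) = x := by
        intro x
        rw [ZMod.val_natCast, Nat.mod_eq_of_lt (lt_of_lt_of_eq (ZMod.val_lt x) (pow_one p))]
        simp [ZMod.natCast_val, ZMod.cast_id]
      simp only [Prod.mk.injEq]
      exact ⟨hb v₁, hb v₂, hb v₃⟩
    · intro w _
      obtain ⟨w₁, w₂, w₃⟩ := w
      have hb : ∀ x : ZMod p, ((((x.val : ℕ) : ZMod (p ^ 1))).val : ZMod p) = x := by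
        intro x
        rw [ZMod.val_natCast, Nat.mod_eq_of_lt (lt_of_lt_of_eq (ZMod.val_lt x) (pow_one p).symm)]
        simp [ZMod.natCast_val, ZMod.cast_id]
      simp only [Prod.mk.injEq]
      exact ⟨hb w₁, hb w₂, hb w₃⟩
  rw [hcard]
  have h1 : (((univ : Finset (ZMod p × ZMod p × ZMod p)).filter
      (fun w => w.2.1 ^ 2 + (u : ZMod p) * w.2.2 ^ 2 = (m : ZMod p))).card : ℤ)
      = ∑ w : ZMod p × ZMod p × ZMod p,
          if w.2.1 ^ 2 + (u : ZMod p) * w.2.2 ^ 2 = (m : ZMod p) then (1 : ℤ) else 0 := by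
    rw [Finset.sum_boole]
  rw [h1, Fintype.sum_prod_type]
  have h2 : ∀ x : ZMod p, (∑ w : ZMod p × ZMod p,
      if w.1 ^ 2 + (u : ZMod p) * w.2 ^ 2 = (m : ZMod p) then (1 : ℤ) else 0) = p + 1 := by
    intro x
    rw [Finset.sum_boole]
    exact pair_count hp2 (u : ZMod p) (m : ZMod p) hu hm'
  calc ∑ x : ZMod p, ∑ w : ZMod p × ZMod p,
        (if w.1 ^ 2 + (u : ZMod p) * w.2 ^ 2 = (m : ZMod p) then (1 : ℤ) else 0)
      = ∑ _x : ZMod p, ((p : ℤ) + 1) := Finset.sum_congr rfl fun x _ => h2 x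
    _ = p * (p + 1) := by
        rw [Finset.sum_const, nsmul_eq_mul]
        simp [ZMod.card]

lemma card_sols (u m : ℤ) (hp2 : p ≠ 2)
    (hu : quadraticChar (ZMod p) (-(u : ZMod p)) = -1)
    (hm : ¬ ((p : ℤ) ∣ m)) (s : ℕ) (hs : 1 ≤ s) :
    ((solsF (p := p) u m s).card : ℤ) = (p : ℤ) ^ (2 * s - 1) * (p + 1) := by
  induction s, hs using Nat.le_induction with
  | base => simpa using card_base u m hp2 hu hm
  | succ s hs ih =>
      have hstep := card_step u m hp2 hu hm s hs
      rw [hstep]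
      push_cast
      rw [ih]
      rw [show 2 * (s + 1) - 1 = 2 + (2 * s - 1) by omega, pow_add]
      ring

/-! ### Reduction from the original equation -/

lemma cnt_reduction (u m : ℤ) (hp2 : p ≠ 2)
    (hu : quadraticChar (ZMod p) (-(u : ZMod p)) = -1)
    (hm : ¬ ((p : ℤ) ∣ m)) (s : ℕ) (hs : 1 ≤ s) :
    Nat.card {v : ZMod (p ^ (s+1)) × ZMod (p ^ (s+1)) × ZMod (p ^ (s+1)) |
      (u : ZMod (p ^ (s+1))) * v.1 ^ 2 + (p : ZMod (p ^ (s+1))) * v.2.1 ^ 2 +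
        (p : ZMod (p ^ (s+1))) * (u : ZMod (p ^ (s+1))) * v.2.2 ^ 2
        = (((p : ℤ) * m : ℤ) : ZMod (p ^ (s+1)))}
      = (solsF (p := p) u m s).card * p ^ 2 := by
  have hdvd1 : p ^ s ∣ p ^ (s + 1) := pow_dvd_pow p (Nat.le_succ s)
  have hdvdp : p ∣ p ^ (s + 1) := dvd_pow_self p (Nat.succ_ne_zero s)
  have hN : p ^ (s + 1) = p * p ^ s := pow_succ' p s
  have hval : ∀ w : ZMod (p ^ s), ((w.val : ℕ) : ZMod (p ^ s)) = w := fun w => by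
    simp [ZMod.natCast_val, ZMod.cast_id]
  have hu0 : (u : ZMod p) ≠ 0 := by
    intro h
    rw [h, neg_zero, quadraticChar_zero] at hu
    norm_num at hu
  have hNm : (((p : ℤ) * m : ℤ) : ZMod (p ^ (s+1)))
      = (p : ZMod (p ^ (s+1))) * (m : ZMod (p ^ (s+1))) := by
    push_cast
    ring
  -- the key equivalence
  have redkey : ∀ (x₀ y₀ z₀ : ZMod (p ^ s)) (b c : ZMod p),
      ((u : ZMod (p ^ (s+1))) * (lift2 s x₀) ^ 2
        + (p : ZMod (p ^ (s+1))) * (lift1 s y₀ b) ^ 2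
        + (p : ZMod (p ^ (s+1))) * (u : ZMod (p ^ (s+1))) * (lift1 s z₀ c) ^ 2
        = (((p : ℤ) * m : ℤ) : ZMod (p ^ (s+1))))
      ↔ ((p : ZMod (p ^ s)) * (u : ZMod (p ^ s)) * x₀ ^ 2 + y₀ ^ 2
          + (u : ZMod (p ^ s)) * z₀ ^ 2 = (m : ZMod (p ^ s))) := by
    intro x₀ y₀ z₀ b c
    have expand : (u : ZMod (p ^ (s+1))) * (lift2 s x₀) ^ 2
        + (p : ZMod (p ^ (s+1))) * (lift1 s y₀ b) ^ 2
        + (p : ZMod (p ^ (s+1))) * (u : ZMod (p ^ (s+1))) * (lift1 s z₀ c) ^ 2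
        = (p : ZMod (p ^ (s+1))) *
          ((p : ZMod (p ^ (s+1))) * (u : ZMod (p ^ (s+1)))
              * ((x₀.val : ℕ) : ZMod (p ^ (s+1))) ^ 2
            + ((y₀.val : ℕ) : ZMod (p ^ (s+1))) ^ 2
            + (u : ZMod (p ^ (s+1))) * ((z₀.val : ℕ) : ZMod (p ^ (s+1))) ^ 2) := by
      rw [lift2_expand, lift1_expand, lift1_expand]
      linear_combination (2 * ((y₀.val : ℕ) : ZMod (p ^ (s+1))) * ((b.val : ℕ) : ZMod (p ^ (s+1)))
          + 2 * (u : ZMod (p ^ (s+1))) * ((z₀.val : ℕ) : ZMod (p ^ (s+1)))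
            * ((c.val : ℕ) : ZMod (p ^ (s+1)))) * hP1_lem (p := p) s
        + ((((b.val : ℕ) : ZMod (p ^ (s+1)))) ^ 2
            + (u : ZMod (p ^ (s+1))) * (((c.val : ℕ) : ZMod (p ^ (s+1)))) ^ 2)
          * (p : ZMod (p ^ (s+1))) * hPP_lem (p := p) s hs
    rw [expand, hNm, mul_cancel_iff hN ppos (pow_pos ppos s)]
    rw [valCast_eq_castHom hdvd1, valCast_eq_castHom hdvd1]
    simp only [map_add, map_mul, map_pow, map_natCast, map_intCast, hval]
  -- convert `Nat.card` to a finset card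
  rw [show Nat.card {v : ZMod (p ^ (s+1)) × ZMod (p ^ (s+1)) × ZMod (p ^ (s+1)) |
      (u : ZMod (p ^ (s+1))) * v.1 ^ 2 + (p : ZMod (p ^ (s+1))) * v.2.1 ^ 2 +
        (p : ZMod (p ^ (s+1))) * (u : ZMod (p ^ (s+1))) * v.2.2 ^ 2
        = (((p : ℤ) * m : ℤ) : ZMod (p ^ (s+1)))}
      = ((univ : Finset (ZMod (p ^ (s+1)) × ZMod (p ^ (s+1)) × ZMod (p ^ (s+1)))).filter
          (fun v => (u : ZMod (p ^ (s+1))) * v.1 ^ 2 + (p : ZMod (p ^ (s+1))) * v.2.1 ^ 2 +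
            (p : ZMod (p ^ (s+1))) * (u : ZMod (p ^ (s+1))) * v.2.2 ^ 2
            = (((p : ℤ) * m : ℤ) : ZMod (p ^ (s+1))))).card from by
    rw [Nat.card_eq_fintype_card]
    simp [Fintype.card_subtype]]
  rw [show (solsF (p := p) u m s).card * p ^ 2
      = ((solsF (p := p) u m s) ×ˢ (univ : Finset (ZMod p × ZMod p))).card from by
    rw [Finset.card_product, Finset.card_univ, Fintype.card_prod, ZMod.card, pow_two]]
  apply Finset.card_nbij'
    (fun v => (((((v.1.val / p : ℕ)) : ZMod (p ^ s)), ((v.2.1.val : ℕ) : ZMod (p ^ s)),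
      ((v.2.2.val : ℕ) : ZMod (p ^ s))), (dig s v.2.1, dig s v.2.2)))
    (fun w => (lift2 s w.1.1, lift1 s w.1.2.1 w.2.1, lift1 s w.1.2.2 w.2.2))
  · -- forward membership
    intro v hv
    obtain ⟨v₁, v₂, v₃⟩ := v
    simp only [mem_coe, mem_filter, mem_univ, true_and] at hv
    -- p divides v₁.val
    have hdvdx : p ∣ v₁.val := by
      have h2 := congrArg (ZMod.castHom hdvdp (ZMod p)) hv
      simp only [map_add, map_mul, map_pow, map_intCast, map_natCast,
        ZMod.natCast_self, zero_mul, mul_zero, add_zero, zero_add] at h2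
      have hpm : (((p : ℤ) * m : ℤ) : ZMod p) = 0 := by
        push_cast
        rw [ZMod.natCast_self]
        ring
      rw [hpm] at h2
      have hx2 : (ZMod.castHom hdvdp (ZMod p) v₁) ^ 2 = 0 := by
        rcases mul_eq_zero.mp h2 with h | h
        · exact absurd h hu0
        · exact h
      have hx : ZMod.castHom hdvdp (ZMod p) v₁ = 0 :=
        pow_eq_zero_iff (n := 2) (by norm_num) |>.mp hx2
      rw [← valCast_eq_castHom hdvdp, ZMod.natCast_eq_zero_iff] at hx
      exact hx
    have e1 : lift2 s (((v₁.val / p : ℕ) : ZMod (p ^ s))) = v₁ := lift2_of_dvd s v₁ hdvdx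
    have e2 : lift1 s ((v₂.val : ZMod (p ^ s))) (dig s v₂) = v₂ := lift1_self s v₂
    have e3 : lift1 s ((v₃.val : ZMod (p ^ s))) (dig s v₃) = v₃ := lift1_self s v₃
    simp only [mem_coe, Finset.mem_product, mem_univ, and_true, solsF, mem_filter, true_and]
    apply (redkey _ _ _ _ _).mp
    rw [e1, e2, e3]
    exact hv
  · -- backward membership
    intro w hw
    obtain ⟨⟨x₀, y₀, z₀⟩, b, c⟩ := w
    simp only [mem_coe, Finset.mem_product, mem_univ, and_true, solsF, mem_filter, true_and] at hw
    simp only [mem_coe, mem_filter, mem_univ, true_and]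
    exact (redkey x₀ y₀ z₀ b c).mpr hw
  · -- left inverse
    intro v hv
    obtain ⟨v₁, v₂, v₃⟩ := v
    simp only [mem_coe, mem_filter, mem_univ, true_and] at hv
    have hdvdx : p ∣ v₁.val := by
      have h2 := congrArg (ZMod.castHom hdvdp (ZMod p)) hv
      simp only [map_add, map_mul, map_pow, map_intCast, map_natCast,
        ZMod.natCast_self, zero_mul, mul_zero, add_zero, zero_add] at h2
      have hpm : (((p : ℤ) * m : ℤ) : ZMod p) = 0 := by
        push_cast
        rw [ZMod.natCast_self]
        ring
      rw [hpm] at h2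
      have hx2 : (ZMod.castHom hdvdp (ZMod p) v₁) ^ 2 = 0 := by
        rcases mul_eq_zero.mp h2 with h | h
        · exact absurd h hu0
        · exact h
      have hx : ZMod.castHom hdvdp (ZMod p) v₁ = 0 :=
        pow_eq_zero_iff (n := 2) (by norm_num) |>.mp hx2
      rw [← valCast_eq_castHom hdvdp, ZMod.natCast_eq_zero_iff] at hx
      exact hx
    simp only [Prod.mk.injEq]
    exact ⟨lift2_of_dvd s v₁ hdvdx, lift1_self s v₂, lift1_self s v₃⟩
  · -- right inverse
    intro w hw
    obtain ⟨⟨x₀, y₀, z₀⟩, b, c⟩ := w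
    simp only [Prod.mk.injEq]
    refine ⟨⟨?_, ?_, ?_⟩, ?_, ?_⟩
    · exact div_lift2 s x₀
    · exact castdown_lift1 s y₀ b
    · exact castdown_lift1 s z₀ c
    · exact dig_lift1 s y₀ b
    · exact dig_lift1 s z₀ c

end LocalCnt

theorem local_count_p_times_unit (p : ℕ) [Fact p.Prime] (hp : p ≠ 2) (u : ℤ)
    (hu : legendreSym p (-u) = -1) (m : ℤ) (hm : ¬ ((p : ℤ) ∣ m))
    (t : ℕ) (ht : 2 ≤ t) :
    (cnt p t u ((p : ℤ) * m) : ℤ) = (p : ℤ) ^ (2 * t) + (p : ℤ) ^ (2 * t - 1) := by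
  obtain ⟨s, hs1, rfl⟩ : ∃ s, 1 ≤ s ∧ t = s + 1 := ⟨t - 1, by omega, by omega⟩
  have hu' : quadraticChar (ZMod p) (-(u : ZMod p)) = -1 := by
    have heq : legendreSym p (-u) = quadraticChar (ZMod p) ((-u : ℤ) : ZMod p) := rfl
    rw [heq] at hu
    push_cast at hu
    exact hu
  have h : cnt p (s + 1) u ((p : ℤ) * m)
      = (LocalCnt.solsF (p := p) u m s).card * p ^ 2 :=
    LocalCnt.cnt_reduction (p := p) u m hp hu' hm s hs1
  rw [h]
  push_cast
  rw [LocalCnt.card_sols u m hp hu' hm s hs1]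
  rw [show 2 * (s + 1) - 1 = (2 * s - 1) + 2 by omega,
    show 2 * (s + 1) = (2 * s - 1) + 3 by omega, pow_add, pow_add]
  ring
end

section
/- Let p be an odd prime and u an integer with Legendre symbol (−u | p) = −1. Then for every integer n and every integer t ≥ 2, the number of triples (x,y,z) ∈ (ℤ/p^tℤ)³ with u·x² + p·y² + p·u·z² = p²·n equals p³ times the number of triples (x,y,z) ∈ (ℤ/p^{t−2}ℤ)³ with u·x² + p·y² + p·u·z² = n. -/
section Aux

variable (p : ℕ) [Fact p.Prime]

/-- Lift a pair (a mod p^s, i mod p) to p·(a + p^s i) mod p^(s+2). -/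
def lift2 (s : ℕ) (a : ZMod (p ^ s)) (i : ZMod p) : ZMod (p ^ (s + 2)) :=
  ((p * (a.val + p ^ s * i.val) : ℕ) : ZMod (p ^ (s + 2)))

lemma inner_lt (s : ℕ) (a : ZMod (p ^ s)) (i : ZMod p) :
    a.val + p ^ s * i.val < p ^ (s + 1) := by
  have ha := ZMod.val_lt a
  have hi := ZMod.val_lt i
  have h2 : p ^ s * (i.val + 1) ≤ p ^ s * p := Nat.mul_le_mul_left _ hi
  rw [Nat.mul_add, Nat.mul_one] at h2
  rw [pow_succ]
  omega

lemma lift2_val (s : ℕ) (a : ZMod (p ^ s)) (i : ZMod p) :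
    (lift2 p s a i).val = p * (a.val + p ^ s * i.val) := by
  have h := inner_lt p s a i
  have hp : 0 < p := (Fact.out : p.Prime).pos
  apply ZMod.val_natCast_of_lt
  calc p * (a.val + p ^ s * i.val) < p * p ^ (s + 1) :=
        (Nat.mul_lt_mul_left hp).mpr h
    _ = p ^ (s + 2) := by ring

lemma lift2_inj (s : ℕ) (a a' : ZMod (p ^ s)) (i i' : ZMod p)
    (h : lift2 p s a i = lift2 p s a' i') : a = a' ∧ i = i' := by
  have hp : 0 < p := (Fact.out : p.Prime).pos
  have hps : 0 < p ^ s := Nat.pow_pos hp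
  have hv := congrArg ZMod.val h
  rw [lift2_val, lift2_val] at hv
  have hv' : a.val + p ^ s * i.val = a'.val + p ^ s * i'.val :=
    Nat.eq_of_mul_eq_mul_left hp hv
  have ha : a.val = a'.val := by
    have h1 := congrArg (· % p ^ s) hv'
    simpa [Nat.add_mul_mod_self_left, Nat.mod_eq_of_lt (ZMod.val_lt a),
      Nat.mod_eq_of_lt (ZMod.val_lt a')] using h1
  have hi : i.val = i'.val := by
    have := hv'
    rw [ha] at this
    have h2 : p ^ s * i.val = p ^ s * i'.val := by omega
    exact Nat.eq_of_mul_eq_mul_left hps h2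
  exact ⟨ZMod.val_injective _ ha, ZMod.val_injective _ hi⟩

lemma cond_iff (u n : ℤ) (s : ℕ) (a b c : ZMod (p ^ s)) (i j k : ZMod p) :
    ((u : ZMod (p ^ (s + 2))) * (lift2 p s a i) ^ 2 +
      (p : ZMod (p ^ (s + 2))) * (lift2 p s b j) ^ 2 +
      (p : ZMod (p ^ (s + 2))) * (u : ZMod (p ^ (s + 2))) * (lift2 p s c k) ^ 2 =
      (((p : ℤ) ^ 2 * n : ℤ) : ZMod (p ^ (s + 2)))) ↔
    ((u : ZMod (p ^ s)) * a ^ 2 + (p : ZMod (p ^ s)) * b ^ 2 +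
      (p : ZMod (p ^ s)) * (u : ZMod (p ^ s)) * c ^ 2 = (n : ZMod (p ^ s))) := by
  have hp0 : (p : ℤ) ≠ 0 := Int.natCast_ne_zero.mpr (Fact.out : p.Prime).ne_zero
  set A : ℤ := (a.val : ℤ) + (p : ℤ) ^ s * (i.val : ℤ) with hA
  set B : ℤ := (b.val : ℤ) + (p : ℤ) ^ s * (j.val : ℤ) with hB
  set C : ℤ := (c.val : ℤ) + (p : ℤ) ^ s * (k.val : ℤ) with hC
  have hla : lift2 p s a i = (((p : ℤ) * A : ℤ) : ZMod (p ^ (s + 2))) := by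
    unfold lift2; rw [hA]; push_cast; ring
  have hlb : lift2 p s b j = (((p : ℤ) * B : ℤ) : ZMod (p ^ (s + 2))) := by
    unfold lift2; rw [hB]; push_cast; ring
  have hlc : lift2 p s c k = (((p : ℤ) * C : ℤ) : ZMod (p ^ (s + 2))) := by
    unfold lift2; rw [hC]; push_cast; ring
  set E : ℤ := u * A ^ 2 + p * B ^ 2 + p * u * C ^ 2 with hE
  have step1 : (u : ZMod (p ^ (s + 2))) * (lift2 p s a i) ^ 2 +
      (p : ZMod (p ^ (s + 2))) * (lift2 p s b j) ^ 2 +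
      (p : ZMod (p ^ (s + 2))) * (u : ZMod (p ^ (s + 2))) * (lift2 p s c k) ^ 2 =
      (((p : ℤ) ^ 2 * E : ℤ) : ZMod (p ^ (s + 2))) := by
    rw [hla, hlb, hlc, hE]; push_cast; ring
  rw [step1, ZMod.intCast_eq_intCast_iff, Int.modEq_iff_dvd]
  have e2 : ((p ^ (s + 2) : ℕ) : ℤ) = (p : ℤ) ^ 2 * (p : ℤ) ^ s := by push_cast; ring
  rw [e2, show (p : ℤ) ^ 2 * n - (p : ℤ) ^ 2 * E = (p : ℤ) ^ 2 * (n - E) by ring,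
    mul_dvd_mul_iff_left (pow_ne_zero 2 hp0),
    show (p : ℤ) ^ s = ((p ^ s : ℕ) : ℤ) by push_cast; ring, ← Int.modEq_iff_dvd,
    ← ZMod.intCast_eq_intCast_iff]
  have hps : ((p : ZMod (p ^ s))) ^ s = 0 := by
    rw [← Nat.cast_pow, ZMod.natCast_self]
  have hav : ((a.val : ℕ) : ZMod (p ^ s)) = a := by rw [ZMod.natCast_val, ZMod.cast_id]
  have hbv : ((b.val : ℕ) : ZMod (p ^ s)) = b := by rw [ZMod.natCast_val, ZMod.cast_id]
  have hcv : ((c.val : ℕ) : ZMod (p ^ s)) = c := by rw [ZMod.natCast_val, ZMod.cast_id]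
  have e4 : ((E : ℤ) : ZMod (p ^ s)) =
      (u : ZMod (p ^ s)) * a ^ 2 + (p : ZMod (p ^ s)) * b ^ 2 +
      (p : ZMod (p ^ s)) * (u : ZMod (p ^ s)) * c ^ 2 := by
    rw [hE, hA, hB, hC]; push_cast [hps, hav, hbv, hcv]; ring
  rw [e4]

lemma dvd_of_sol (u n : ℤ) (hu : legendreSym p (-u) = -1) (s : ℕ)
    (x y z : ZMod (p ^ (s + 2)))
    (h : (u : ZMod (p ^ (s + 2))) * x ^ 2 + (p : ZMod (p ^ (s + 2))) * y ^ 2 +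
      (p : ZMod (p ^ (s + 2))) * (u : ZMod (p ^ (s + 2))) * z ^ 2 =
      (((p : ℤ) ^ 2 * n : ℤ) : ZMod (p ^ (s + 2)))) :
    p ∣ x.val ∧ p ∣ y.val ∧ p ∣ z.val := by
  have hpP : p.Prime := Fact.out
  have hp0 : (p : ℤ) ≠ 0 := Int.natCast_ne_zero.mpr hpP.ne_zero
  have hprime : Prime (p : ℤ) := Nat.prime_iff_prime_int.mp hpP
  set X : ℤ := (x.val : ℤ) with hX
  set Y : ℤ := (y.val : ℤ) with hY
  set Z : ℤ := (z.val : ℤ) with hZ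
  have hx : ((X : ℤ) : ZMod (p ^ (s + 2))) = x := by
    rw [hX, Int.cast_natCast, ZMod.natCast_val, ZMod.cast_id]
  have hy : ((Y : ℤ) : ZMod (p ^ (s + 2))) = y := by
    rw [hY, Int.cast_natCast, ZMod.natCast_val, ZMod.cast_id]
  have hz : ((Z : ℤ) : ZMod (p ^ (s + 2))) = z := by
    rw [hZ, Int.cast_natCast, ZMod.natCast_val, ZMod.cast_id]
  have h' : ((u * X ^ 2 + p * Y ^ 2 + p * u * Z ^ 2 : ℤ) : ZMod (p ^ (s + 2))) =
      (((p : ℤ) ^ 2 * n : ℤ) : ZMod (p ^ (s + 2))) := by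
    push_cast [hx, hy, hz]
    rw [h]; push_cast; ring
  rw [ZMod.intCast_eq_intCast_iff, Int.modEq_iff_dvd] at h'
  rw [show ((p ^ (s + 2) : ℕ) : ℤ) = (p : ℤ) ^ (s + 2) by push_cast; ring] at h'
  obtain ⟨e, he⟩ := h'
  -- p divides p ∣ u X²
  have hpu : ¬ (p : ℤ) ∣ u := by
    intro hdvd
    have h0 : ((-u : ℤ) : ZMod p) = 0 := by
      rw [Int.cast_neg, neg_eq_zero, ZMod.intCast_zmod_eq_zero_iff_dvd]
      exact hdvd
    have := (legendreSym.eq_zero_iff p (-u)).mpr h0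
    omega
  have h1 : (p : ℤ) ∣ u * X ^ 2 :=
    ⟨p * n - Y ^ 2 - u * Z ^ 2 - p ^ (s + 1) * e, by linear_combination -he⟩
  have hXd : (p : ℤ) ∣ X := by
    rcases hprime.dvd_mul.mp h1 with h | h
    · exact absurd h hpu
    · exact hprime.dvd_of_dvd_pow h
  obtain ⟨x1, hx1⟩ := hXd
  have h2 : (p : ℤ) ∣ Y ^ 2 + u * Z ^ 2 := by
    have h3 : (p : ℤ) * (p : ℤ) ∣ (p : ℤ) * (Y ^ 2 + u * Z ^ 2) :=
      ⟨n - u * x1 ^ 2 - p ^ s * e, by linear_combination -he - u * (X + p * x1) * hx1⟩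
    exact (mul_dvd_mul_iff_left hp0).mp h3
  have hns : ¬ IsSquare ((-u : ℤ) : ZMod p) := (legendreSym.eq_neg_one_iff p).mp hu
  have h4 : ((Y : ℤ) : ZMod p) ^ 2 = ((-u : ℤ) : ZMod p) * ((Z : ℤ) : ZMod p) ^ 2 := by
    have h5 : ((Y ^ 2 + u * Z ^ 2 : ℤ) : ZMod p) = 0 :=
      (ZMod.intCast_zmod_eq_zero_iff_dvd _ p).mpr h2
    push_cast at h5 ⊢
    linear_combination h5
  have hz0 : ((Z : ℤ) : ZMod p) = 0 := by
    by_contra hzz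
    apply hns
    refine ⟨((Y : ℤ) : ZMod p) * (((Z : ℤ) : ZMod p))⁻¹, ?_⟩
    have hz2 : ((Z : ℤ) : ZMod p) ^ 2 ≠ 0 := pow_ne_zero _ hzz
    field_simp
    push_cast at h4 ⊢
    linear_combination -h4
  have hy0 : ((Y : ℤ) : ZMod p) = 0 := by
    have : ((Y : ℤ) : ZMod p) ^ 2 = 0 := by rw [h4, hz0]; ring
    exact pow_eq_zero_iff (by norm_num) |>.mp this
  refine ⟨Int.natCast_dvd_natCast.mp ?_, Int.natCast_dvd_natCast.mp ?_,
    Int.natCast_dvd_natCast.mp ?_⟩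
  · rw [← hX]; exact ⟨x1, hx1⟩
  · rw [← hY]; exact (ZMod.intCast_zmod_eq_zero_iff_dvd Y p).mp hy0
  · rw [← hZ]; exact (ZMod.intCast_zmod_eq_zero_iff_dvd Z p).mp hz0

end Aux

theorem local_count_scaling (p : ℕ) [Fact p.Prime] (hp : p ≠ 2) (u : ℤ)
    (hu : legendreSym p (-u) = -1) (n : ℤ) (t : ℕ) (ht : 2 ≤ t) :
    cnt p t u ((p : ℤ) ^ 2 * n) = p ^ 3 * cnt p (t - 2) u n := by
  obtain ⟨s, rfl⟩ : ∃ s, t = s + 2 := ⟨t - 2, by omega⟩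
  rw [show s + 2 - 2 = s from rfl]
  unfold cnt
  set T := {w : ZMod (p ^ s) × ZMod (p ^ s) × ZMod (p ^ s) |
    (u : ZMod (p ^ s)) * w.1 ^ 2 + (p : ZMod (p ^ s)) * w.2.1 ^ 2 +
      (p : ZMod (p ^ s)) * (u : ZMod (p ^ s)) * w.2.2 ^ 2 = (n : ZMod (p ^ s))} with hT
  set S := {v : ZMod (p ^ (s + 2)) × ZMod (p ^ (s + 2)) × ZMod (p ^ (s + 2)) |
    (u : ZMod (p ^ (s + 2))) * v.1 ^ 2 + (p : ZMod (p ^ (s + 2))) * v.2.1 ^ 2 +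
      (p : ZMod (p ^ (s + 2))) * (u : ZMod (p ^ (s + 2))) * v.2.2 ^ 2 =
      (((p : ℤ) ^ 2 * n : ℤ) : ZMod (p ^ (s + 2)))} with hS
  have key : Nat.card (T × (ZMod p × ZMod p × ZMod p)) = Nat.card S := by
    apply Nat.card_eq_of_bijective
      (f := fun wk => (⟨(lift2 p s wk.1.1.1 wk.2.1, lift2 p s wk.1.1.2.1 wk.2.2.1,
        lift2 p s wk.1.1.2.2 wk.2.2.2), (cond_iff p u n s _ _ _ _ _ _).mpr wk.1.2⟩ : S))
    constructor
    · rintro ⟨⟨⟨a, b, c⟩, hw⟩, ⟨i, j, k⟩⟩ ⟨⟨⟨a', b', c'⟩, hw'⟩, ⟨i', j', k'⟩⟩ hEq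
      simp only [Subtype.mk.injEq, Prod.mk.injEq] at hEq
      obtain ⟨h1, h2, h3⟩ := hEq
      obtain ⟨ha, hi⟩ := lift2_inj p s _ _ _ _ h1
      obtain ⟨hb, hj⟩ := lift2_inj p s _ _ _ _ h2
      obtain ⟨hc, hk⟩ := lift2_inj p s _ _ _ _ h3
      simp_all
    · rintro ⟨⟨x, y, z⟩, hv⟩
      obtain ⟨hdx, hdy, hdz⟩ := dvd_of_sol p u n hu s x y z hv
      obtain ⟨qx, hqx⟩ := hdx
      obtain ⟨qy, hqy⟩ := hdy
      obtain ⟨qz, hqz⟩ := hdz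
      have hp1 : 0 < p := (Fact.out : p.Prime).pos
      have hpow : 0 < p ^ s := Nat.pow_pos hp1
      have bound : ∀ (w : ZMod (p ^ (s + 2))) (q : ℕ), w.val = p * q → q < p ^ (s + 1) := by
        intro w q hw
        have hlt := ZMod.val_lt w
        rw [hw] at hlt
        have h2 : p * q < p * p ^ (s + 1) := by
          rw [show p * p ^ (s + 1) = p ^ (s + 2) by ring]; exact hlt
        exact Nat.lt_of_mul_lt_mul_left h2
      have hdiv : ∀ q : ℕ, q < p ^ (s + 1) → q / p ^ s < p := by
        intro q hq
        exact (Nat.div_lt_iff_lt_mul hpow).mpr (by rw [Nat.mul_comm, ← pow_succ]; exact hq)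
      have heq : ∀ (w : ZMod (p ^ (s + 2))) (q : ℕ), w.val = p * q →
          lift2 p s ((q % p ^ s : ℕ) : ZMod (p ^ s)) ((q / p ^ s : ℕ) : ZMod p) = w := by
        intro w q hw
        apply ZMod.val_injective
        rw [lift2_val, ZMod.val_natCast_of_lt (Nat.mod_lt _ hpow),
          ZMod.val_natCast_of_lt (hdiv q (bound w q hw)), Nat.mod_add_div, ← hw]
      have hxeq := heq x qx hqx
      have hyeq := heq y qy hqy
      have hzeq := heq z qz hqz
      have hQ : (((qx % p ^ s : ℕ) : ZMod (p ^ s)), ((qy % p ^ s : ℕ) : ZMod (p ^ s)),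
          ((qz % p ^ s : ℕ) : ZMod (p ^ s))) ∈ T :=
        (cond_iff p u n s _ _ _ _ _ _).mp (by rw [hxeq, hyeq, hzeq]; exact hv)
      refine ⟨⟨⟨_, hQ⟩, (((qx / p ^ s : ℕ) : ZMod p), ((qy / p ^ s : ℕ) : ZMod p),
        ((qz / p ^ s : ℕ) : ZMod p))⟩, ?_⟩
      exact Subtype.ext (Prod.ext hxeq (Prod.ext hyeq hzeq))
  rw [← key, Nat.card_prod]
  have hK : Nat.card (ZMod p × ZMod p × ZMod p) = p ^ 3 := by
    simp only [Nat.card_prod, Nat.card_zmod]; ring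
  rw [hK, Nat.mul_comm]
end

section
/- Let n = 4^a·k be a positive integer with 4 ∤ k. Then there exists T such that for all integers t ≥ T, the number of triples (x,y,z) ∈ (ℤ/2^tℤ)³ with y·z − x² = n equals: 3·2^{2t−1} if k ≡ 7 (mod 8); 3·2^{2t−1} − 2^{2t−1−a} if k ≡ 3 (mod 8); and 3·2^{2t−1} − 3·2^{2t−2−a} if k ≡ 1 or 2 (mod 4). -/
/-- The number of solutions `(x,y,z)` in `ℤ/2^tℤ` of `y z - x² = n`. -/
noncomputable def cntG1 (t : ℕ) (n : ℤ) : ℕ :=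
  Nat.card {v : ZMod (2 ^ t) × ZMod (2 ^ t) × ZMod (2 ^ t) |
    v.2.1 * v.2.2 - v.1 ^ 2 = (n : ZMod (2 ^ t))}

/-- The number of solutions `(x,y,z)` in `ℤ/2^tℤ` of `4 y z - x² = n`. -/
noncomputable def cntG2 (t : ℕ) (n : ℤ) : ℕ :=
  Nat.card {v : ZMod (2 ^ t) × ZMod (2 ^ t) × ZMod (2 ^ t) |
    4 * v.2.1 * v.2.2 - v.1 ^ 2 = (n : ZMod (2 ^ t))}

open Finset


lemma periodic_iter (d : ℕ) (P : ℕ → Prop) (h : ∀ x, P (x + d) ↔ P x) :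
    ∀ q x, P (x + q * d) ↔ P x := by
  intro q
  induction q with
  | zero => simp
  | succ q ih =>
    intro x
    have e : x + (q + 1) * d = (x + q * d) + d := by ring
    rw [e, h, ih]

lemma periodic_filter_card (d m : ℕ) (P : ℕ → Prop) [DecidablePred P]
    (h : ∀ x, P (x + d) ↔ P x) :
    ((range (m * d)).filter P).card = m * ((range d).filter P).card := by
  induction m with
  | zero => simp
  | succ m ih =>
    have e : (m + 1) * d = m * d + d := by ring
    rw [e, Finset.range_add, filter_union, card_union_of_disjoint, ih]
    · rw [Finset.filter_map, card_map]
      have : (range d).filter ((fun x => P x) ∘ (addLeftEmbedding (m * d))) =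
          (range d).filter P := by
        apply filter_congr
        intro x _
        simp only [Function.comp, addLeftEmbedding_apply]
        have e2 : m * d + x = x + m * d := by ring
        rw [e2]
        exact ⟨fun hx => (periodic_iter d P h m x).1 hx, fun hx => (periodic_iter d P h m x).2 hx⟩
      rw [this]; ring
    · rw [Finset.disjoint_left]
      intro x hx hx2
      simp only [mem_filter, mem_range, mem_map, addLeftEmbedding_apply] at hx hx2
      obtain ⟨⟨y, hy, rfl⟩, -⟩ := hx2
      omega

lemma count_multiples (d m : ℕ) (hd : 0 < d) :
    ((range (m * d)).filter (fun x => d ∣ x)).card = m := by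
  rw [periodic_filter_card d m _ (fun x => by
    simp [Nat.dvd_add_self_right])]
  have : (range d).filter (fun x => d ∣ x) = {0} := by
    ext z
    simp only [mem_filter, mem_range, mem_singleton]
    constructor
    · rintro ⟨h1, h2⟩
      rcases h2 with ⟨c, rfl⟩
      rcases Nat.eq_zero_or_pos c with rfl | hc
      · simp
      · nlinarith
    · rintro rfl; exact ⟨hd, dvd_zero d⟩
  rw [this]; simp

lemma count_residue (d m r : ℕ) (hd : 0 < d) :
    ((range (m * d)).filter (fun x => x % d = r % d)).card = m := by
  rw [periodic_filter_card d m _ (fun x => by simp [Nat.add_mod_right])]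
  have : (range d).filter (fun x => x % d = r % d) = {r % d} := by
    ext z
    simp only [mem_filter, mem_range, mem_singleton]
    constructor
    · rintro ⟨h1, h2⟩; rwa [Nat.mod_eq_of_lt h1] at h2
    · rintro rfl; exact ⟨Nat.mod_lt _ hd, Nat.mod_mod_of_dvd r dvd_rfl⟩
  rw [this]; simp


lemma zcount (t j u m : ℕ) (hu : Odd u) (hj : j < t) :
    ((range (2^t)).filter (fun z => (2^j * u) * z % 2^t = m % 2^t)).card
      = if 2^j ∣ m then 2^j else 0 := by
  by_cases hm : 2^j ∣ m
  · rw [if_pos hm]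
    obtain ⟨m', rfl⟩ := hm
    set d : ℕ := 2^(t-j) with hd
    have hd1 : 1 < d := by
      have : 0 < t - j := by omega
      calc 1 < 2^1 := by norm_num
      _ ≤ d := Nat.pow_le_pow_right (by norm_num) (by omega)
    have htd : 2^t = 2^j * d := by rw [hd, ← pow_add]; congr 1; omega
    have hcop : Nat.Coprime u d := (hu.coprime_two_right).pow_right _
    obtain ⟨w, -, hw⟩ := Nat.exists_mul_mod_eq_one_of_coprime hcop hd1
    have huw : u * w ≡ 1 [MOD d] := by
      unfold Nat.ModEq; rw [hw]; exact (Nat.mod_eq_of_lt hd1).symm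
    have key : ∀ z, ((2^j * u) * z % 2^t = (2^j * m') % 2^t) ↔ z % d = (w * m') % d := by
      intro z
      have h1 : ((2^j * u) * z ≡ 2^j * m' [MOD 2^t]) ↔ (u * z ≡ m' [MOD d]) := by
        rw [htd, mul_assoc]
        exact Nat.ModEq.mul_left_cancel_iff' (by positivity)
      have h2 : (u * z ≡ m' [MOD d]) ↔ (z ≡ w * m' [MOD d]) := by
        constructor
        · intro h
          calc z = 1 * z := (one_mul z).symm
          _ ≡ (u * w) * z [MOD d] := (Nat.ModEq.mul_right z huw).symm
          _ = w * (u * z) := by ring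
          _ ≡ w * m' [MOD d] := Nat.ModEq.mul_left w h
        · intro h
          calc u * z ≡ u * (w * m') [MOD d] := Nat.ModEq.mul_left u h
          _ = (u * w) * m' := by ring
          _ ≡ 1 * m' [MOD d] := Nat.ModEq.mul_right m' huw
          _ = m' := one_mul m'
      exact (h1.trans h2)
    have : (range (2^t)).filter (fun z => (2^j * u) * z % 2^t = (2^j * m') % 2^t)
        = (range (2^t)).filter (fun z => z % d = (w * m') % d) := by
      apply filter_congr; intro z _; simp only [key z, eq_iff_iff]
    rw [this]
    have : (2:ℕ)^t = 2^j * d := htd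
    rw [this, count_residue d (2^j) (w*m') (by positivity)]
  · rw [if_neg hm]
    rw [Finset.card_eq_zero, Finset.filter_eq_empty_iff]
    intro z _
    intro hcon
    apply hm
    have h1 : 2^j ∣ 2^t := pow_dvd_pow 2 (le_of_lt hj)
    have h2 : (2:ℕ)^j ∣ m % 2^t := by
      rw [← hcon]
      exact (Nat.dvd_mod_iff h1).mpr ⟨u * z, by ring⟩
    exact (Nat.dvd_mod_iff h1).mp h2

lemma zcount0 (t m : ℕ) :
    ((range (2^t)).filter (fun z => 0 * z % 2^t = m % 2^t)).card
      = if 2^t ∣ m then 2^t else 0 := by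
  by_cases hm : 2^t ∣ m
  · rw [if_pos hm]
    have : (range (2^t)).filter (fun z => 0 * z % 2^t = m % 2^t) = range (2^t) := by
      rw [Finset.filter_eq_self]
      intro z _
      simp [Nat.eq_zero_of_dvd_of_lt, Nat.mod_eq_zero_of_dvd hm]
    rw [this, card_range]
  · rw [if_neg hm]
    rw [Finset.card_eq_zero, Finset.filter_eq_empty_iff]
    intro z _ hcon
    apply hm
    simp at hcon
    omega


def Csq (j m : ℕ) : ℕ := ((range (2^j)).filter (fun x => 2^j ∣ (x^2 + m))).card

lemma Csq_zero (m : ℕ) : Csq 0 m = 1 := by simp [Csq]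

lemma Csq_one (m : ℕ) : Csq 1 m = 1 := by
  rw [Csq, Finset.card_filter]
  show ∑ x ∈ range 2, (if 2^1 ∣ (x^2+m) then 1 else 0) = 1
  rw [Finset.sum_range_succ, Finset.sum_range_succ, Finset.sum_range_zero]
  simp only [show (0:ℕ)^2 = 0 from rfl, show (1:ℕ)^2 = 1 from rfl, show (2:ℕ)^1 = 2 from rfl]
  split_ifs <;> omega

lemma Csq_two (m : ℕ) (hm : m % 4 ≠ 0) : Csq 2 m = if m % 4 = 3 then 2 else 0 := by
  rw [Csq, Finset.card_filter]
  show ∑ x ∈ range 4, (if 2^2 ∣ (x^2+m) then 1 else 0) = _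
  rw [Finset.sum_range_succ, Finset.sum_range_succ, Finset.sum_range_succ,
    Finset.sum_range_succ, Finset.sum_range_zero]
  simp only [show (0:ℕ)^2 = 0 from rfl, show (1:ℕ)^2 = 1 from rfl,
    show (2:ℕ)^2 = 4 from rfl, show (3:ℕ)^2 = 9 from rfl]
  split_ifs <;> omega

set_option maxHeartbeats 1000000 in
lemma Csq_three (m : ℕ) (hm : m % 2 = 1) : Csq 3 m = if m % 8 = 7 then 4 else 0 := by
  rw [Csq, Finset.card_filter]
  show ∑ x ∈ range 8, (if 2^3 ∣ (x^2+m) then 1 else 0) = _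
  rw [Finset.sum_range_succ, Finset.sum_range_succ, Finset.sum_range_succ,
    Finset.sum_range_succ, Finset.sum_range_succ, Finset.sum_range_succ,
    Finset.sum_range_succ, Finset.sum_range_succ, Finset.sum_range_zero]
  simp only [show (0:ℕ)^2 = 0 from rfl, show (1:ℕ)^2 = 1 from rfl,
    show (2:ℕ)^2 = 4 from rfl, show (3:ℕ)^2 = 9 from rfl,
    show (4:ℕ)^2 = 16 from rfl, show (5:ℕ)^2 = 25 from rfl,
    show (6:ℕ)^2 = 36 from rfl, show (7:ℕ)^2 = 49 from rfl,
    show (2:ℕ)^3 = 8 from rfl]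
  split_ifs <;> omega

lemma Csq_strip (j m : ℕ) : Csq (j+2) (4*m) = 2 * Csq j m := by
  have hhalf : ((range (2^(j+1))).filter (fun u => 2^j ∣ (u^2+m))).card = 2 * Csq j m := by
    rw [Csq, show (2:ℕ)^(j+1) = 2 * 2^j from by ring]
    apply periodic_filter_card
    intro u
    rw [show (u + 2^j)^2 + m = 2^j*(2*u + 2^j) + (u^2+m) from by ring]
    exact Nat.dvd_add_right ⟨2*u + 2^j, rfl⟩
  rw [Csq, ← hhalf]
  have hev : ∀ x ∈ (range (2^(j+2))).filter (fun x => 2^(j+2) ∣ (x^2 + 4*m)),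
      x % 2 = 0 := by
    intro x hx
    simp only [mem_filter, mem_range] at hx
    have h4 : (4:ℕ) ∣ x^2 + 4*m := dvd_trans ⟨2^j, by ring⟩ hx.2
    rcases Nat.even_or_odd x with ⟨c, rfl⟩ | ⟨c, rfl⟩
    · omega
    · exfalso
      rw [show (2*c+1)^2 + 4*m = 4*(c*c+c+m) + 1 from by ring] at h4
      omega
  apply Finset.card_nbij' (i := fun x => x / 2) (j := fun u => 2 * u)
  · intro x hx
    have hx2 := hev x hx
    simp only [mem_filter, mem_range, mem_coe] at hx ⊢
    obtain ⟨c, rfl⟩ : ∃ c, x = 2*c := ⟨x/2, by omega⟩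
    have h1 : (2*c)/2 = c := by omega
    rw [h1]
    constructor
    · have : 2*c < 2*2^(j+1) := by
        calc 2*c < 2^(j+2) := hx.1
        _ = 2*2^(j+1) := by ring
      omega
    · have := hx.2
      rw [show (2*c)^2 + 4*m = 4*(c^2+m) from by ring,
        show (2:ℕ)^(j+2) = 4*2^j from by ring] at this
      exact (Nat.mul_dvd_mul_iff_left (by norm_num : (0:ℕ) < 4)).mp this
  · intro u hu
    simp only [mem_filter, mem_range, mem_coe] at hu ⊢
    constructor
    · calc 2*u < 2*2^(j+1) := by omega
      _ = 2^(j+2) := by ring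
    · rw [show (2*u)^2 + 4*m = 4*(u^2+m) from by ring,
        show (2:ℕ)^(j+2) = 4*2^j from by ring]
      exact Nat.mul_dvd_mul_left 4 hu.2
  · intro x hx
    have := hev x hx
    dsimp only
    omega
  · intro u hu
    dsimp only
    omega

lemma Csq_strip_iter (a j k : ℕ) : Csq (j + 2*a) (4^a * k) = 2^a * Csq j k := by
  induction a with
  | zero => simp
  | succ a ih =>
    have e1 : j + 2*(a+1) = (j + 2*a) + 2 := by ring
    have e2 : (4:ℕ)^(a+1) * k = 4 * (4^a * k) := by ring
    rw [e1, e2, Csq_strip, ih]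
    ring

lemma Csq_mono (j i k : ℕ) (h : Csq j k = 0) : Csq (j+i) k = 0 := by
  rw [Csq, Finset.card_eq_zero, Finset.filter_eq_empty_iff] at *
  intro x hx hdvd
  apply h (Finset.mem_range.mpr (Nat.mod_lt _ (by positivity)))
  have h1 : (x % 2^j)^2 + k ≡ x^2 + k [MOD 2^j] :=
    Nat.ModEq.add_right k ((Nat.mod_modEq x (2^j)).pow 2)
  have h2 : (2:ℕ)^j ∣ x^2 + k := dvd_trans (pow_dvd_pow 2 (by omega)) hdvd
  exact (Nat.modEq_zero_iff_dvd).mp (h1.trans ((Nat.modEq_zero_iff_dvd).mpr h2))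

lemma Csq_head (j m : ℕ) (hm : 2^j ∣ m) : Csq j m = 2^(j/2) := by
  rw [Csq]
  have step : (range (2^j)).filter (fun x => 2^j ∣ x^2 + m)
      = (range (2^j)).filter (fun x => 2^((j+1)/2) ∣ x) := by
    apply filter_congr
    intro x _
    constructor
    · intro hx
      have hx2 : (2:ℕ)^j ∣ x^2 := by
        have := Nat.dvd_sub hx hm
        simpa using this
      rcases Nat.eq_zero_or_pos x with rfl | hxpos
      · exact dvd_zero _
      · have hle : j ≤ padicValNat 2 (x^2) := (padicValNat_dvd_iff_le (by positivity)).mp hx2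
        rw [padicValNat.pow] at hle
        exact (padicValNat_dvd_iff_le (by omega)).mpr (by omega)
    · rintro ⟨y, rfl⟩
      apply dvd_add ?_ hm
      calc (2:ℕ)^j ∣ 2^(2*((j+1)/2)) := pow_dvd_pow 2 (by omega)
      _ ∣ (2^((j+1)/2) * y)^2 := ⟨y^2, by rw [mul_pow, ← pow_mul]; ring⟩
  rw [step, show (2:ℕ)^j = 2^(j/2) * 2^((j+1)/2) from by rw [← pow_add]; congr 1; omega]
  exact count_multiples _ _ (by positivity)

lemma Csq_lift (j k : ℕ) (hj : 3 ≤ j) (hk : k % 2 = 1) : Csq (j+1) k = Csq j k := by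
  obtain ⟨j', rfl⟩ : ∃ j', j = j' + 3 := ⟨j - 3, by omega⟩
  set p : ℕ := 2^j' with hp
  have hppos : 0 < p := Nat.two_pow_pos j'
  have e8 : (2:ℕ)^(j'+3) = 8*p := by rw [hp]; ring
  have e16 : (2:ℕ)^(j'+3+1) = 16*p := by rw [hp]; ring
  -- core lifting computation
  have core : ∀ x w : ℕ, x < 8*p → x^2 + k = 8*p*w →
      ∃ w', ((x + 4*p) % (8*p))^2 + k = 8*p*w' ∧ w' % 2 = (w+1) % 2 := by
    intro x w hx hw
    have hxodd : x % 2 = 1 := by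
      have hd : (2:ℕ) ∣ 8*p*w := ⟨4*p*w, by ring⟩
      rcases Nat.even_or_odd x with ⟨c, rfl⟩ | hodd
      · exfalso
        have hcc : (c+c)^2 = 2*(2*(c*c)) := by ring
        omega
      · exact Nat.odd_iff.mp hodd
    obtain ⟨c, hc⟩ : ∃ c, x = 2*c+1 := ⟨x/2, by omega⟩
    set y := (x + 4*p) % (8*p) with hy
    have hylt : y < 8*p := Nat.mod_lt _ (by omega)
    obtain ⟨e, he, he1⟩ : ∃ e, x + 4*p = y + 8*p*e ∧ e ≤ 1 := by
      refine ⟨(x+4*p)/(8*p), (Nat.mod_add_div _ _).symm, ?_⟩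
      have h2 : (x+4*p)/(8*p) < 2 := (Nat.div_lt_iff_lt_mul (by omega)).mpr (by omega)
      omega
    have master : y^2 + k + 8*p*(2*(e*y) + 8*(p*(e*e))) = 8*p*(w + 1 + 2*c + 2*p) := by
      zify at hw he hc ⊢
      have hyz : (y:ℤ) = x + 4*p - 8*p*e := by linarith
      rw [hyz]
      linear_combination hw + 8*(p:ℤ)*hc
    have hdvd1 : 8*p ∣ y^2 + k := by
      have hsub : y^2+k = 8*p*(w+1+2*c+2*p) - 8*p*(2*(e*y)+8*(p*(e*e))) := by omega
      rw [hsub]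
      exact Nat.dvd_sub (Dvd.intro _ rfl) (Dvd.intro _ rfl)
    obtain ⟨w', hw'⟩ := hdvd1
    refine ⟨w', hw', ?_⟩
    have hcancel : w' + (2*(e*y)+8*(p*(e*e))) = w + 1 + 2*c + 2*p := by
      apply Nat.eq_of_mul_eq_mul_left (show 0 < 8*p by omega)
      rw [Nat.mul_add, ← hw']
      exact master
    omega
  -- Part (i): halves
  have part1 : Csq (j'+3+1) k = 2 * ((range (8*p)).filter (fun x => 16*p ∣ x^2 + k)).card := by
    have hper : ∀ x, (16*p ∣ (x + 8*p)^2 + k) ↔ (16*p ∣ x^2 + k) := by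
      intro x
      rw [show (x + 8*p)^2 + k = 16*p*(x+4*p) + (x^2+k) from by ring]
      exact Nat.dvd_add_right ⟨x+4*p, rfl⟩
    have hcard := periodic_filter_card (8*p) 2 (fun x => 16*p ∣ x^2 + k) hper
    rw [show 2*(8*p) = 16*p from by ring] at hcard
    rw [Csq, e16]
    exact hcard
  -- Part (ii): pairing
  set s := (range (8*p)).filter (fun x => 8*p ∣ x^2+k) with hs
  have hQs : s.filter (fun x => 16*p ∣ x^2+k) = (range (8*p)).filter (fun x => 16*p ∣ x^2+k) := by
    rw [hs, filter_filter]
    apply filter_congr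
    intro x _
    constructor
    · rintro ⟨h1, h2⟩; exact h2
    · intro h2; exact ⟨dvd_trans ⟨2, by ring⟩ h2, h2⟩
  have keyW : ∀ x, x^2 + k = 8*p*((x^2+k)/(8*p)) → ((16*p ∣ x^2+k) ↔ ((x^2+k)/(8*p)) % 2 = 0) := by
    intro x hww
    constructor
    · rintro ⟨v, hv⟩
      have : 8*p*((x^2+k)/(8*p)) = 8*p*(2*v) := by rw [← hww, hv]; ring
      have := Nat.eq_of_mul_eq_mul_left (show 0 < 8*p by omega) this
      omega
    · intro hpar
      obtain ⟨v, hv⟩ : ∃ v, (x^2+k)/(8*p) = 2*v := ⟨(x^2+k)/(8*p)/2, by omega⟩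
      exact ⟨v, by rw [hww, hv]; ring⟩
  have pair : (s.filter (fun x => 16*p ∣ x^2+k)).card
      = (s.filter (fun x => ¬ (16*p ∣ x^2+k))).card := by
    apply Finset.card_nbij' (i := fun x => (x+4*p)%(8*p)) (j := fun x => (x+4*p)%(8*p))
    · intro x hx
      simp only [hs, mem_filter, mem_range, mem_coe] at hx ⊢
      obtain ⟨⟨hxlt, hxdvd⟩, hxQ⟩ := hx
      have hww : x^2+k = 8*p*((x^2+k)/(8*p)) := by rw [Nat.mul_div_cancel' hxdvd]
      have hwpar := (keyW x hww).mp hxQ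
      obtain ⟨w', hw', hpar'⟩ := core x ((x^2+k)/(8*p)) hxlt hww
      refine ⟨⟨Nat.mod_lt _ (by omega), ⟨w', hw'⟩⟩, ?_⟩
      intro hQ'
      have hww' : ((x+4*p)%(8*p))^2+k = 8*p*((((x+4*p)%(8*p))^2+k)/(8*p)) := by
        rw [Nat.mul_div_cancel' ⟨w', hw'⟩]
      have := (keyW _ hww').mp hQ'
      have hweq : (((x+4*p)%(8*p))^2+k)/(8*p) = w' := by
        rw [hw']; exact Nat.mul_div_cancel_left _ (by omega)
      omega
    · intro x hx
      simp only [hs, mem_filter, mem_range, mem_coe] at hx ⊢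
      obtain ⟨⟨hxlt, hxdvd⟩, hxQ⟩ := hx
      have hww : x^2+k = 8*p*((x^2+k)/(8*p)) := by rw [Nat.mul_div_cancel' hxdvd]
      have hwpar : ((x^2+k)/(8*p)) % 2 = 1 := by
        by_contra hcon
        exact hxQ ((keyW x hww).mpr (by omega))
      obtain ⟨w', hw', hpar'⟩ := core x ((x^2+k)/(8*p)) hxlt hww
      refine ⟨⟨Nat.mod_lt _ (by omega), ⟨w', hw'⟩⟩, ?_⟩
      have hww' : ((x+4*p)%(8*p))^2+k = 8*p*((((x+4*p)%(8*p))^2+k)/(8*p)) := by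
        rw [Nat.mul_div_cancel' ⟨w', hw'⟩]
      apply (keyW _ hww').mpr
      have hweq : (((x+4*p)%(8*p))^2+k)/(8*p) = w' := by
        rw [hw']; exact Nat.mul_div_cancel_left _ (by omega)
      omega
    · intro x hx
      simp only [hs, mem_filter, mem_range, mem_coe] at hx
      dsimp only
      rw [Nat.mod_add_mod, show x+4*p+4*p = x + 8*p from by ring, Nat.add_mod_right,
        Nat.mod_eq_of_lt hx.1.1]
    · intro x hx
      simp only [hs, mem_filter, mem_range, mem_coe] at hx
      dsimp only
      rw [Nat.mod_add_mod, show x+4*p+4*p = x + 8*p from by ring, Nat.add_mod_right,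
        Nat.mod_eq_of_lt hx.1.1]
  have split := Finset.card_filter_add_card_filter_not
    (s := s) (p := fun x => 16*p ∣ x^2+k)
  have final : Csq (j'+3) k = s.card := by rw [hs, Csq, e8]
  rw [part1, ← hQs, final, ← split]
  omega

lemma four_pow (a : ℕ) : (4:ℕ)^a = 2^(2*a) := by rw [pow_mul]; norm_num

lemma Csq_n_low (a k n : ℕ) (hn : n = 4^a*k) (j : ℕ) (hj : j ≤ 2*a) : Csq j n = 2^(j/2) := by
  apply Csq_head
  subst hn
  calc (2:ℕ)^j ∣ 2^(2*a) := pow_dvd_pow 2 hj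
  _ ∣ 4^a*k := ⟨k, by rw [four_pow]⟩

lemma Csq_n_high (a k n : ℕ) (hn : n = 4^a*k) (i : ℕ) : Csq (2*a+i) n = 2^a * Csq i k := by
  subst hn
  rw [show 2*a+i = i+2*a from by ring, Csq_strip_iter]

lemma Csq_k_high (k : ℕ) (h4 : k % 4 ≠ 0) :
    ∀ i, Csq (3+i) k = if k % 8 = 7 then 4 else 0 := by
  intro i
  rcases Nat.even_or_odd k with hke | hko
  · -- k even, k%4 = 2, no solutions from level 2 on
    have hk2 : k % 4 = 2 := by
      obtain ⟨c, rfl⟩ := hke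
      omega
    have h8 : k % 8 ≠ 7 := by omega
    rw [if_neg h8]
    have h2 : Csq 2 k = 0 := by rw [Csq_two k h4]; simp [show k % 4 ≠ 3 from by omega]
    have := Csq_mono 2 (1+i) k h2
    rwa [show 2+(1+i) = 3+i from by ring] at this
  · have hk1 : k % 2 = 1 := Nat.odd_iff.mp hko
    by_cases h7 : k % 8 = 7
    · rw [if_pos h7]
      induction i with
      | zero => rw [Csq_three k hk1, if_pos h7]
      | succ i ih =>
        rw [show 3+(i+1) = (3+i)+1 from by ring, Csq_lift (3+i) k (by omega) hk1, ih]
    · rw [if_neg h7]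
      have h3 : Csq 3 k = 0 := by rw [Csq_three k hk1, if_neg h7]
      exact Csq_mono 3 i k h3

def cls (t y : ℕ) : ℕ := if y = 0 then t else padicValNat 2 y

lemma hv_lt (t y : ℕ) (h0 : y ≠ 0) (hy : y < 2^t) : padicValNat 2 y < t := by
  have h1 : (2:ℕ)^(padicValNat 2 y) ∣ y := pow_padicValNat_dvd
  have h2 : (2:ℕ)^(padicValNat 2 y) ≤ y := Nat.le_of_dvd (by omega) h1
  have := Nat.pow_lt_pow_iff_right (a := 2) (by norm_num) |>.mp (lt_of_le_of_lt h2 hy)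
  exact this

lemma count_z_eq (t y m : ℕ) (hy : y < 2^t) :
    ((range (2^t)).filter (fun z => y*z % 2^t = m % 2^t)).card
      = if 2^(cls t y) ∣ m then 2^(cls t y) else 0 := by
  by_cases h0 : y = 0
  · subst h0
    rw [cls, if_pos rfl]
    have : (range (2^t)).filter (fun z => 0*z % 2^t = m % 2^t)
        = (range (2^t)).filter (fun z => 0*z % 2^t = m % 2^t) := rfl
    exact zcount0 t m
  · rw [cls, if_neg h0]
    have hjlt : padicValNat 2 y < t := hv_lt t y h0 hy
    have hdvd : (2:ℕ)^(padicValNat 2 y) ∣ y := pow_padicValNat_dvd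
    have hyd : y = 2^(padicValNat 2 y) * (y / 2^(padicValNat 2 y)) :=
      (Nat.mul_div_cancel' hdvd).symm
    have hu : Odd (y / 2^(padicValNat 2 y)) := by
      have hfac : y.factorization 2 = padicValNat 2 y := Nat.factorization_def y Nat.prime_two
      have := Nat.not_dvd_ordCompl Nat.prime_two h0
      rw [hfac] at this
      rcases Nat.even_or_odd (y / 2^(padicValNat 2 y)) with he | ho
      · exact absurd he.two_dvd this
      · exact ho
    calc ((range (2^t)).filter (fun z => y*z % 2^t = m % 2^t)).card
        = ((range (2^t)).filter
            (fun z => (2^(padicValNat 2 y) * (y / 2^(padicValNat 2 y)))*z % 2^t = m % 2^t)).card := by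
          rw [← hyd]
      _ = _ := zcount t _ _ m hu hjlt

lemma fiber_card (t j : ℕ) (hj : j < t) :
    ((range (2^t)).filter (fun y => cls t y = j)).card = 2^(t-1-j) := by
  have heq : (range (2^t)).filter (fun y => cls t y = j)
      = ((range (2^t)).filter (fun y => 2^j ∣ y)).filter (fun y => ¬ 2^(j+1) ∣ y) := by
    rw [filter_filter]
    apply filter_congr
    intro y hy
    simp only [mem_range] at hy
    constructor
    · intro hcls
      by_cases h0 : y = 0
      · subst h0; rw [cls, if_pos rfl] at hcls; omega
      · rw [cls, if_neg h0] at hcls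
        subst hcls
        exact ⟨pow_padicValNat_dvd, pow_succ_padicValNat_not_dvd h0⟩
    · rintro ⟨h1, h2⟩
      have h0 : y ≠ 0 := by rintro rfl; exact h2 (dvd_zero _)
      rw [cls, if_neg h0]
      have hle : j ≤ padicValNat 2 y := (padicValNat_dvd_iff_le h0).mp h1
      have hlt : padicValNat 2 y < j+1 := by
        by_contra hcon
        exact h2 ((padicValNat_dvd_iff_le h0).mpr (by omega))
      omega
  rw [heq]
  have hs1 : ((range (2^t)).filter (fun y => 2^j ∣ y)).card = 2^(t-j) := by
    rw [show (2:ℕ)^t = 2^(t-j)*2^j from by rw [← pow_add]; congr 1; omega]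
    exact count_multiples _ _ (Nat.two_pow_pos j)
  have hs2 : (((range (2^t)).filter (fun y => 2^j ∣ y)).filter (fun y => 2^(j+1) ∣ y)).card
      = 2^(t-j-1) := by
    rw [filter_filter]
    have heq2 : (range (2^t)).filter (fun y => 2^j ∣ y ∧ 2^(j+1) ∣ y)
        = (range (2^t)).filter (fun y => 2^(j+1) ∣ y) := by
      apply filter_congr; intro y _; constructor
      · rintro ⟨_, h⟩; exact h
      · intro h; exact ⟨dvd_trans (pow_dvd_pow 2 (by omega)) h, h⟩
    rw [heq2, show (2:ℕ)^t = 2^(t-j-1)*2^(j+1) from by rw [← pow_add]; congr 1; omega]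
    exact count_multiples _ _ (Nat.two_pow_pos _)
  have hsplit := Finset.card_filter_add_card_filter_not
    (s := (range (2^t)).filter (fun y => 2^j ∣ y)) (p := fun y => 2^(j+1) ∣ y)
  have hpow : (2:ℕ)^(t-j) = 2^(t-j-1) + 2^(t-1-j) := by
    have e2 : t-j-1 = t-1-j := by omega
    have e1 : t-j = (t-1-j)+1 := by omega
    rw [e2, e1, pow_succ]
    ring
  omega

lemma fiber_card_top (t : ℕ) : ((range (2^t)).filter (fun y => cls t y = t)).card = 1 := by
  have heq : (range (2^t)).filter (fun y => cls t y = t) = {0} := by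
    ext y
    simp only [mem_filter, mem_range, mem_singleton]
    constructor
    · rintro ⟨h1, h2⟩
      by_contra h0
      rw [cls, if_neg h0] at h2
      have := hv_lt t y h0 h1
      omega
    · rintro rfl
      exact ⟨Nat.two_pow_pos t, by rw [cls, if_pos rfl]⟩
  rw [heq]; simp

lemma cnt_to_nat (n t : ℕ) :
    cntG1 t (n:ℤ) = (((range (2^t)) ×ˢ ((range (2^t)) ×ˢ (range (2^t)))).filter
      (fun v : ℕ × ℕ × ℕ => (v.2.1 * v.2.2) % 2^t = (v.1^2 + n) % 2^t)).card := by
  haveI : NeZero ((2:ℕ)^t) := ⟨(Nat.two_pow_pos t).ne'⟩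
  rw [cntG1, Nat.card_eq_fintype_card, Fintype.card_subtype]
  symm
  apply Finset.card_nbij'
    (i := fun v : ℕ × ℕ × ℕ => (((v.1 : ZMod (2^t)), ((v.2.1 : ZMod (2^t)), (v.2.2 : ZMod (2^t))))))
    (j := fun w : ZMod (2^t) × ZMod (2^t) × ZMod (2^t) => (w.1.val, (w.2.1.val, w.2.2.val)))
  · rintro ⟨x, y, z⟩ hv
    simp only [mem_filter, mem_product, mem_range, mem_coe] at hv
    obtain ⟨⟨hx, hy, hz⟩, hcond⟩ := hv
    simp only [mem_filter, mem_univ, true_and, Set.mem_setOf_eq, mem_coe]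
    have : ((y : ZMod (2^t)) * z = (n : ZMod (2^t)) + (x : ZMod (2^t))^2) := by
      have := (ZMod.natCast_eq_natCast_iff' (y*z) (x^2+n) (2^t)).mpr hcond
      push_cast at this
      rw [this]; ring
    rw [sub_eq_iff_eq_add]
    push_cast
    exact this
  · rintro ⟨x, y, z⟩ hv
    simp only [mem_filter, mem_univ, true_and, Set.mem_setOf_eq, mem_coe] at hv
    simp only [mem_filter, mem_product, mem_range, mem_coe]
    refine ⟨⟨ZMod.val_lt x, ZMod.val_lt y, ZMod.val_lt z⟩, ?_⟩
    rw [← ZMod.natCast_eq_natCast_iff']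
    push_cast
    rw [ZMod.natCast_val, ZMod.natCast_val, ZMod.natCast_val, ZMod.cast_id, ZMod.cast_id,
      ZMod.cast_id]
    rw [sub_eq_iff_eq_add] at hv
    rw [hv]; push_cast; ring
  · rintro ⟨x, y, z⟩ hv
    simp only [mem_filter, mem_product, mem_range, mem_coe] at hv
    obtain ⟨⟨hx, hy, hz⟩, -⟩ := hv
    simp only [ZMod.val_cast_of_lt hx, ZMod.val_cast_of_lt hy, ZMod.val_cast_of_lt hz]
  · rintro ⟨x, y, z⟩ hv
    simp only [Prod.mk.injEq]
    exact ⟨ZMod.natCast_rightInverse x, ZMod.natCast_rightInverse y, ZMod.natCast_rightInverse z⟩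

lemma main_count (n t : ℕ) :
    cntG1 t (n:ℤ) = 2^t * ((∑ j ∈ range t, 2^(t-1-j) * Csq j n) + Csq t n) := by
  rw [cnt_to_nat]
  rw [Finset.card_filter]
  rw [Finset.sum_product]
  have inner_z : ∀ x y : ℕ, (∑ z ∈ range (2^t),
      if (y * z) % 2^t = (x^2 + n) % 2^t then 1 else 0)
      = ((range (2^t)).filter (fun z => y*z % 2^t = (x^2+n) % 2^t)).card := by
    intro x y
    rw [Finset.card_filter]
  have step1 : ∀ x : ℕ, (∑ p ∈ (range (2^t)) ×ˢ (range (2^t)),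
      if (p.1 * p.2) % 2^t = (x^2 + n) % 2^t then 1 else 0)
      = ∑ j ∈ range (t+1), ((range (2^t)).filter (fun y => cls t y = j)).card *
          (if 2^j ∣ (x^2+n) then 2^j else 0) := by
    intro x
    rw [Finset.sum_product]
    calc (∑ y ∈ range (2^t), ∑ z ∈ range (2^t),
        if (y * z) % 2^t = (x^2 + n) % 2^t then 1 else 0)
        = ∑ y ∈ range (2^t), (if 2^(cls t y) ∣ (x^2+n) then 2^(cls t y) else 0) := by
          apply Finset.sum_congr rfl
          intro y hy
          rw [inner_z x y, count_z_eq t y (x^2+n) (mem_range.mp hy)]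
      _ = ∑ j ∈ range (t+1), ∑ y ∈ (range (2^t)).filter (fun y => cls t y = j),
            (if 2^(cls t y) ∣ (x^2+n) then 2^(cls t y) else 0) := by
          rw [Finset.sum_fiberwise_of_maps_to]
          intro y hy
          simp only [mem_range] at hy ⊢
          by_cases h0 : y = 0
          · subst h0; rw [cls, if_pos rfl]; omega
          · rw [cls, if_neg h0]; have := hv_lt t y h0 hy; omega
      _ = _ := by
          apply Finset.sum_congr rfl
          intro j hj
          rw [Finset.sum_congr rfl (fun y hy => by rw [(mem_filter.mp hy).2]),
            Finset.sum_const, smul_eq_mul]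
  rw [Finset.sum_congr rfl (fun x _ => step1 x)]
  rw [Finset.sum_comm]
  have step2 : ∀ j, j ≤ t → (∑ x ∈ range (2^t),
      ((range (2^t)).filter (fun y => cls t y = j)).card * (if 2^j ∣ (x^2+n) then 2^j else 0))
      = ((range (2^t)).filter (fun y => cls t y = j)).card * (2^j * (2^(t-j) * Csq j n)) := by
    intro j hj
    rw [← Finset.mul_sum]
    congr 1
    have hper : ∀ x, (2^j ∣ ((x + 2^j)^2 + n)) ↔ (2^j ∣ (x^2 + n)) := by
      intro x
      rw [show (x + 2^j)^2 + n = 2^j*(2*x+2^j) + (x^2+n) from by ring]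
      exact Nat.dvd_add_right ⟨2*x+2^j, rfl⟩
    calc (∑ x ∈ range (2^t), if 2^j ∣ (x^2+n) then 2^j else 0)
        = ∑ x ∈ (range (2^t)).filter (fun x => 2^j ∣ (x^2+n)), 2^j := by
          rw [Finset.sum_filter]
      _ = ((range (2^t)).filter (fun x => 2^j ∣ (x^2+n))).card * 2^j := by
          rw [Finset.sum_const, smul_eq_mul]
      _ = (2^(t-j) * Csq j n) * 2^j := by
          congr 1
          rw [show (2:ℕ)^t = 2^(t-j)*2^j from by rw [← pow_add]; congr 1; omega]
          rw [periodic_filter_card _ _ _ hper]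
          rfl
      _ = 2^j * (2^(t-j) * Csq j n) := by ring
  rw [Finset.sum_congr rfl (fun j hj => step2 j (by simpa using Nat.lt_succ_iff.mp (mem_range.mp hj)))]
  rw [Finset.sum_range_succ]
  rw [fiber_card_top t]
  rw [Finset.sum_congr rfl (fun j hj => by rw [fiber_card t j (mem_range.mp hj)])]
  have last : 1 * (2^t * (2^(t-t) * Csq t n)) = 2^t * Csq t n := by
    rw [Nat.sub_self, pow_zero]; ring
  rw [last, mul_add]
  congr 1
  rw [Finset.mul_sum]
  apply Finset.sum_congr rfl
  intro j hj
  have hjlt : j < t := mem_range.mp hj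
  have e : (2:ℕ)^(t-1-j) * (2^j * (2^(t-j) * Csq j n)) = (2^(t-1-j) * 2^j * 2^(t-j)) * Csq j n := by ring
  rw [e, ← pow_add, ← pow_add, show t-1-j+j+(t-j) = t + (t-1-j) from by omega, pow_add]
  ring

lemma pow2_split (e : ℕ) : (2:ℕ)^(e+1) = 2^e + 2^e := by rw [pow_succ]; ring

lemma geo_sum : ∀ d : ℕ, (∑ i ∈ range d, 2^(d-1-i)) + 1 = 2^d := by
  intro d
  induction d with
  | zero => simp
  | succ d ih =>
    rw [Finset.sum_range_succ']
    have e : ∀ i ∈ range d, (2:ℕ)^(d+1-1-(i+1)) = 2^(d-1-i) := by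
      intro i _; congr 1; omega
    rw [Finset.sum_congr rfl e]
    have e2 : (2:ℕ)^(d+1) = 2^d + 2^d := pow2_split d
    have e3 : (2:ℕ)^(d+1-1-0) = 2^d := by congr 1
    omega

lemma tail_sum (m t c : ℕ) (hmt : m ≤ t) :
    (∑ j ∈ Ico m t, 2^(t-1-j) * c) + c = 2^(t-m) * c := by
  clear hmt
  rw [Finset.sum_Ico_eq_sum_range]
  have e : ∀ i ∈ range (t-m), (2:ℕ)^(t-1-(m+i)) * c = 2^((t-m)-1-i) * c := by
    intro i hi
    simp only [mem_range] at hi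
    congr 2
    omega
  rw [Finset.sum_congr rfl e, ← Finset.sum_mul]
  have := geo_sum (t-m)
  nlinarith [this]

lemma head_sum : ∀ a t : ℕ, 2*a+2 ≤ t →
    (∑ j ∈ range (2*a+1), 2^(t-1-j) * 2^(j/2)) + 2^(t-a) = 3 * 2^(t-1) := by
  intro a
  induction a with
  | zero =>
    intro t ht
    rw [show 2*0+1 = 1 from rfl, Finset.sum_range_one]
    have e2 : (2:ℕ)^(t-0) = 2^(t-1) + 2^(t-1) := by
      have := pow2_split (t-1)
      rw [show t-1+1 = t-0 from by omega] at this
      exact this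
    simp only [Nat.zero_div, pow_zero, mul_one, Nat.sub_zero] at *
    omega
  | succ a ih =>
    intro t ht
    have ih' := ih t (by omega)
    rw [show 2*(a+1)+1 = (2*a+1)+1+1 from by ring, Finset.sum_range_succ, Finset.sum_range_succ]
    have e1 : (2:ℕ)^(t-1-(2*a+1)) * 2^((2*a+1)/2) = 2^(t-a-2) := by
      rw [← pow_add]; congr 1; omega
    have e2 : (2:ℕ)^(t-1-((2*a+1)+1)) * 2^(((2*a+1)+1)/2) = 2^(t-a-2) := by
      rw [← pow_add]; congr 1; omega
    have e3 : (2:ℕ)^(t-a) = 2^(t-a-1) + 2^(t-a-1) := by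
      have := pow2_split (t-a-1)
      rw [show t-a-1+1 = t-a from by omega] at this
      exact this
    have e4 : (2:ℕ)^(t-a-1) = 2^(t-a-2) + 2^(t-a-2) := by
      have := pow2_split (t-a-2)
      rw [show t-a-2+1 = t-a-1 from by omega] at this
      exact this
    have e5 : t-(a+1) = t-a-1 := by omega
    rw [e1, e2, e5]
    omega

lemma S_core (a k n t c2 c8 : ℕ) (hn : n = 4^a*k)
    (hc2 : Csq 2 k = c2) (hc8 : ∀ i, Csq (3+i) k = c8) (ht : 2*a+4 ≤ t) :
    (∑ j ∈ range t, 2^(t-1-j) * Csq j n) + Csq t n + 2^(t-a)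
      = 3*2^(t-1) + 2^(t-a-2) + 2^(t-1-(2*a+2))*(2^a*c2) + 2^(t-(2*a+3))*(2^a*c8) := by
  have hsplit : (∑ j ∈ range t, 2^(t-1-j) * Csq j n)
      = (∑ j ∈ range (2*a+1), 2^(t-1-j) * Csq j n)
        + (∑ j ∈ Ico (2*a+1) t, 2^(t-1-j) * Csq j n) := by
    rw [Finset.range_eq_Ico,
      ← Finset.sum_Ico_consecutive _ (by omega : 0 ≤ 2*a+1) (by omega : 2*a+1 ≤ t),
      ← Finset.range_eq_Ico]
  have hhead : (∑ j ∈ range (2*a+1), 2^(t-1-j) * Csq j n) + 2^(t-a) = 3*2^(t-1) := by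
    rw [Finset.sum_congr rfl (fun j hj => by
      rw [Csq_n_low a k n hn j (by have := mem_range.mp hj; omega)])]
    exact head_sum a t (by omega)
  have hpeel : (∑ j ∈ Ico (2*a+1) t, 2^(t-1-j) * Csq j n)
      = 2^(t-1-(2*a+1)) * Csq (2*a+1) n + (2^(t-1-(2*a+2)) * Csq (2*a+2) n
        + (∑ j ∈ Ico (2*a+3) t, 2^(t-1-j) * Csq j n)) := by
    rw [Finset.sum_eq_sum_Ico_succ_bot (by omega : 2*a+1 < t)]
    congr 1
    rw [show 2*a+1+1 = 2*a+2 from by omega]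
    rw [Finset.sum_eq_sum_Ico_succ_bot (by omega : 2*a+2 < t)]
  have hv1 : Csq (2*a+1) n = 2^a := by
    have := Csq_n_high a k n hn 1
    rw [this, Csq_one, mul_one]
  have hv2 : Csq (2*a+2) n = 2^a * c2 := by
    rw [Csq_n_high a k n hn 2, hc2]
  have hvt : Csq t n = 2^a * c8 := by
    have h1 := Csq_n_high a k n hn (t-2*a)
    rw [show 2*a+(t-2*a) = t from by omega] at h1
    have h2 := hc8 (t-2*a-3)
    rw [show 3+(t-2*a-3) = t-2*a from by omega] at h2
    rw [h1, h2]
  have hvhigh : (∑ j ∈ Ico (2*a+3) t, 2^(t-1-j) * Csq j n)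
      = ∑ j ∈ Ico (2*a+3) t, 2^(t-1-j) * (2^a * c8) := by
    apply Finset.sum_congr rfl
    intro j hj
    simp only [mem_Ico] at hj
    congr 1
    obtain ⟨i, rfl⟩ : ∃ i, j = 2*a+(3+i) := ⟨j-2*a-3, by omega⟩
    rw [Csq_n_high a k n hn (3+i), hc8 i]
  have htail : (∑ j ∈ Ico (2*a+3) t, 2^(t-1-j) * (2^a * c8)) + (2^a * c8)
      = 2^(t-(2*a+3)) * (2^a * c8) :=
    tail_sum (2*a+3) t _ (by omega)
  have i1 : (2:ℕ)^(t-1-(2*a+1)) * 2^a = 2^(t-a-2) := by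
    rw [← pow_add]; congr 1; omega
  rw [hsplit, hpeel, hv1, hv2, hvt, hvhigh, i1]
  omega

theorem dyadic_count_G1 (n : ℕ) (hn : 0 < n) (a k : ℕ) (hk : n = 4 ^ a * k)
    (h4 : ¬ (4 ∣ k)) :
    ∃ T : ℕ, ∀ t : ℕ, T ≤ t →
      (k % 8 = 7 → (cntG1 t n : ℤ) = 3 * 2 ^ (2 * t - 1)) ∧
      (k % 8 = 3 → (cntG1 t n : ℤ) = 3 * 2 ^ (2 * t - 1) - 2 ^ (2 * t - 1 - a)) ∧
      (k % 4 = 1 ∨ k % 4 = 2 →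
        (cntG1 t n : ℤ) = 3 * 2 ^ (2 * t - 1) - 3 * 2 ^ (2 * t - 2 - a)) := by
  have hk4 : k % 4 ≠ 0 := by omega
  refine ⟨2*a+4, fun t ht => ?_⟩
  have hmaster := main_count n t
  have i4 : (2:ℕ)^(t-a-1) = 2^(t-a-2)+2^(t-a-2) := by
    have := pow2_split (t-a-2); rw [show t-a-2+1 = t-a-1 from by omega] at this; exact this
  have i5 : (2:ℕ)^(t-a) = 2^(t-a-1)+2^(t-a-1) := by
    have := pow2_split (t-a-1); rw [show t-a-1+1 = t-a from by omega] at this; exact this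
  have i2 : (2:ℕ)^(t-1-(2*a+2)) * (2^a*2) = 2^(t-a-2) := by
    rw [show (2:ℕ)^a*2 = 2^(a+1) from by rw [pow_succ], ← pow_add]; congr 1; omega
  have i3 : (2:ℕ)^(t-(2*a+3)) * (2^a*4) = 2^(t-a-1) := by
    rw [show (2:ℕ)^a*4 = 2^(a+2) from by rw [pow_add]; norm_num, ← pow_add]
    congr 1; omega
  have hbig : (2:ℕ)^t * (3*2^(t-1)) = 3*2^(2*t-1) := by
    rw [show (2:ℕ)^t * (3*2^(t-1)) = 3*(2^t*2^(t-1)) from by ring, ← pow_add,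
      show t+(t-1) = 2*t-1 from by omega]
  refine ⟨?_, ?_, ?_⟩
  · intro h7
    have hc2 : Csq 2 k = 2 := by rw [Csq_two k hk4, if_pos (by omega : k%4 = 3)]
    have hc8 : ∀ i, Csq (3+i) k = 4 := fun i => by rw [Csq_k_high k hk4 i, if_pos h7]
    have E := S_core a k n t 2 4 hk hc2 hc8 ht
    rw [i2, i3] at E
    have hS : (∑ j ∈ range t, 2^(t-1-j) * Csq j n) + Csq t n = 3*2^(t-1) := by omega
    rw [hS, hbig] at hmaster
    exact_mod_cast hmaster
  · intro h3
    have hc2 : Csq 2 k = 2 := by rw [Csq_two k hk4, if_pos (by omega : k%4 = 3)]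
    have hc8 : ∀ i, Csq (3+i) k = 0 := fun i => by
      rw [Csq_k_high k hk4 i, if_neg (by omega)]
    have E := S_core a k n t 2 0 hk hc2 hc8 ht
    rw [i2] at E
    simp only [mul_zero] at E
    have hS : (∑ j ∈ range t, 2^(t-1-j) * Csq j n) + Csq t n + 2^(t-a-1) = 3*2^(t-1) := by
      omega
    have h1 : cntG1 t (n:ℤ) + 2^t * 2^(t-a-1) = 2^t * (3*2^(t-1)) := by
      rw [hmaster, ← Nat.mul_add, hS]
    have h2 : (2:ℕ)^t * 2^(t-a-1) = 2^(2*t-1-a) := by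
      rw [← pow_add]; congr 1; omega
    have hnat : cntG1 t (n:ℤ) + 2^(2*t-1-a) = 3*2^(2*t-1) := by omega
    have hcast := congrArg (fun x : ℕ => (x:ℤ)) hnat
    push_cast at hcast
    linarith
  · intro h12
    have hc2 : Csq 2 k = 0 := by
      rw [Csq_two k hk4, if_neg (by rcases h12 with h|h <;> omega)]
    have hc8 : ∀ i, Csq (3+i) k = 0 := fun i => by
      rw [Csq_k_high k hk4 i, if_neg (by rcases h12 with h|h <;> omega)]
    have E := S_core a k n t 0 0 hk hc2 hc8 ht
    simp only [mul_zero] at E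
    have hS : (∑ j ∈ range t, 2^(t-1-j) * Csq j n) + Csq t n + 3*2^(t-a-2) = 3*2^(t-1) := by
      omega
    have h1 : cntG1 t (n:ℤ) + 2^t * (3*2^(t-a-2)) = 2^t * (3*2^(t-1)) := by
      rw [hmaster, ← Nat.mul_add, hS]
    have h2 : (2:ℕ)^t * (3*2^(t-a-2)) = 3*2^(2*t-2-a) := by
      rw [show (2:ℕ)^t*(3*2^(t-a-2)) = 3*(2^t*2^(t-a-2)) from by ring, ← pow_add,
        show t+(t-a-2) = 2*t-2-a from by omega]
    have hnat : cntG1 t (n:ℤ) + 3*2^(2*t-2-a) = 3*2^(2*t-1) := by omega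
    have hcast := congrArg (fun x : ℕ => (x:ℤ)) hnat
    push_cast at hcast
    linarith
end

section
/- For every integer t ≥ 3 and every integer n, the number of triples (x,y,z) ∈ (ℤ/2^tℤ)³ with 4·y·z − x² = n equals: 3·4^t if n ≡ 7 (mod 8); 4^t if n ≡ 3 (mod 8); and 0 if n ≡ 1 or 2 (mod 4). -/
set_option maxRecDepth 40000

lemma card_setOf (α : Type*) [Fintype α] (p : α → Prop) [DecidablePred p] :
    Nat.card {x | p x} = (Finset.univ.filter p).card := by
  rw [Nat.card_eq_fintype_card]
  exact Fintype.card_subtype p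

variable {t : ℕ}

lemma dvd_pow_succ (t : ℕ) : (2:ℕ) ^ t ∣ 2 ^ (t+1) := pow_dvd_pow 2 (Nat.le_succ t)

lemma ker_lemma (t : ℕ) (u : ZMod (2 ^ (t+1))) :
    ZMod.castHom (dvd_pow_succ t) (ZMod (2^t)) u = 0 ↔ u = 0 ∨ u = (2^t : ℕ) := by
  haveI : NeZero (2 ^ (t+1)) := ⟨pow_ne_zero _ two_ne_zero⟩
  constructor
  · intro h
    rw [ZMod.castHom_apply, ← ZMod.natCast_val, ZMod.natCast_eq_zero_iff] at h
    obtain ⟨c, hc⟩ := h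
    have hv : u.val < 2 ^ (t+1) := ZMod.val_lt u
    rw [hc] at hv
    have h2 : 2 ^ (t+1) = 2 ^ t * 2 := by ring
    rw [h2] at hv
    have hc2 : c < 2 := by
      by_contra hcon
      push_neg at hcon
      exact absurd hv (not_lt.2 (Nat.mul_le_mul_left _ hcon))
    interval_cases c
    · left; rw [← ZMod.natCast_zmod_val u, hc]; simp
    · right; rw [← ZMod.natCast_zmod_val u, hc]; simp
  · rintro (rfl | rfl)
    · simp
    · rw [map_natCast]
      exact ZMod.natCast_self _

lemma castHom_lift (t : ℕ) (a : ZMod (2^t)) :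
    ZMod.castHom (dvd_pow_succ t) (ZMod (2^t)) ((a.val : ℕ) : ZMod (2^(t+1))) = a := by
  haveI : NeZero (2 ^ t) := ⟨pow_ne_zero _ two_ne_zero⟩
  rw [map_natCast, ZMod.natCast_zmod_val]

lemma two_pow_ne_zero' (t : ℕ) : ((2^t : ℕ) : ZMod (2^(t+1))) ≠ 0 := by
  intro h
  rw [ZMod.natCast_eq_zero_iff] at h
  exact absurd (Nat.le_of_dvd (pow_pos two_pos t) h)
    (not_le.2 (pow_lt_pow_right₀ one_lt_two (Nat.lt_succ_self t)))

lemma fiber_one (t : ℕ) (a : ZMod (2^t)) :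
    Finset.univ.filter (fun x : ZMod (2^(t+1)) =>
        ZMod.castHom (dvd_pow_succ t) (ZMod (2^t)) x = a) =
      {((a.val : ℕ) : ZMod (2^(t+1))), ((a.val : ℕ) : ZMod (2^(t+1))) + (2^t : ℕ)} := by
  ext x
  simp only [Finset.mem_filter, Finset.mem_univ, true_and, Finset.mem_insert,
    Finset.mem_singleton]
  constructor
  · intro h
    have h0 : ZMod.castHom (dvd_pow_succ t) (ZMod (2^t)) (x - ((a.val : ℕ) : ZMod (2^(t+1)))) = 0 := by
      rw [map_sub, h, castHom_lift, sub_self]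
    rcases (ker_lemma t _).1 h0 with h1 | h1
    · left; linear_combination h1
    · right; linear_combination h1
  · rintro (rfl | rfl)
    · exact castHom_lift t a
    · rw [map_add, castHom_lift, map_natCast, ZMod.natCast_self, add_zero]

lemma fiber_one_card (t : ℕ) (a : ZMod (2^t)) :
    (Finset.univ.filter (fun x : ZMod (2^(t+1)) =>
        ZMod.castHom (dvd_pow_succ t) (ZMod (2^t)) x = a)).card = 2 := by
  rw [fiber_one]
  rw [Finset.card_insert_of_notMem, Finset.card_singleton]
  simp only [Finset.mem_singleton]
  intro h
  exact two_pow_ne_zero' t (by linear_combination -h)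

abbrev M (t : ℕ) := ZMod (2^(t+1))
abbrev R (t : ℕ) := ZMod (2^t)

def phi (t : ℕ) (v : M t × M t × M t) : R t × R t × R t :=
  (ZMod.castHom (dvd_pow_succ t) (ZMod (2^t)) v.1,
   ZMod.castHom (dvd_pow_succ t) (ZMod (2^t)) v.2.1,
   ZMod.castHom (dvd_pow_succ t) (ZMod (2^t)) v.2.2)

lemma fiber_three_card (t : ℕ) (c : R t × R t × R t) :
    (Finset.univ.filter (fun v : M t × M t × M t => phi t v = c)).card = 8 := by
  have hset : (Finset.univ.filter (fun v : M t × M t × M t => phi t v = c)) =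
      (Finset.univ.filter (fun x : M t =>
        ZMod.castHom (dvd_pow_succ t) (ZMod (2^t)) x = c.1)) ×ˢ
      ((Finset.univ.filter (fun x : M t =>
        ZMod.castHom (dvd_pow_succ t) (ZMod (2^t)) x = c.2.1)) ×ˢ
      (Finset.univ.filter (fun x : M t =>
        ZMod.castHom (dvd_pow_succ t) (ZMod (2^t)) x = c.2.2))) := by
    rw [← Finset.filter_product, ← Finset.univ_product_univ, ← Finset.filter_product]
    apply Finset.filter_congr
    intro v _
    simp only [phi, Prod.ext_iff, and_assoc]
  rw [hset, Finset.card_product, Finset.card_product, fiber_one_card, fiber_one_card,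
    fiber_one_card]

def Fm (t : ℕ) (v : M t × M t × M t) : M t := 4 * v.2.1 * v.2.2 - v.1 ^ 2
def Fr (t : ℕ) (v : R t × R t × R t) : R t := 4 * v.2.1 * v.2.2 - v.1 ^ 2

lemma cast_Fm (t : ℕ) (v : M t × M t × M t) :
    ZMod.castHom (dvd_pow_succ t) (ZMod (2^t)) (Fm t v) = Fr t (phi t v) := by
  simp [Fm, Fr, phi, map_sub, map_mul, map_pow, map_ofNat]

lemma key_equiv (t : ℕ) (n : ℤ) (v : M t × M t × M t) :
    Fr t (phi t v) = (n : R t) ↔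
      (Fm t v = (n : M t) ∨ Fm t v = (n : M t) + (2^t : ℕ)) := by
  have h : Fr t (phi t v) = (n : R t) ↔
      ZMod.castHom (dvd_pow_succ t) (ZMod (2^t)) (Fm t v - (n : M t)) = 0 := by
    rw [map_sub, cast_Fm, map_intCast, sub_eq_zero]
  rw [h, ker_lemma]
  constructor
  · rintro (h1 | h1)
    · left; linear_combination h1
    · right; linear_combination h1
  · rintro (h1 | h1)
    · left; linear_combination h1
    · right; linear_combination h1

lemma step_count (t : ℕ) (n : ℤ) :
    (Finset.univ.filter (fun v : M t × M t × M t => Fm t v = (n : M t))).card +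
    (Finset.univ.filter (fun v : M t × M t × M t => Fm t v = (n : M t) + (2^t : ℕ))).card =
    8 * (Finset.univ.filter (fun v : R t × R t × R t => Fr t v = (n : R t))).card := by
  classical
  set C := Finset.univ.filter (fun v : R t × R t × R t => Fr t v = (n : R t)) with hC
  have hD : (Finset.univ.filter (fun v : M t × M t × M t => Fr t (phi t v) = (n : R t))).card
      = ∑ c ∈ C, 8 := by
    rw [Finset.card_eq_sum_card_fiberwise (f := phi t) (t := C)
      (fun v hv => by
        simp only [hC, Finset.mem_coe, Finset.mem_filter, Finset.mem_univ, true_and] at hv ⊢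
        exact hv)]
    apply Finset.sum_congr rfl
    intro c hc
    simp only [hC, Finset.mem_filter, Finset.mem_univ, true_and] at hc
    rw [← fiber_three_card t c]
    congr 1
    ext v
    simp only [Finset.mem_filter, Finset.mem_univ, true_and, and_iff_right_iff_imp]
    intro h; rw [h]; exact hc
  have hsplit : (Finset.univ.filter (fun v : M t × M t × M t => Fr t (phi t v) = (n : R t)))
      = (Finset.univ.filter (fun v : M t × M t × M t => Fm t v = (n : M t))) ∪
        (Finset.univ.filter (fun v : M t × M t × M t => Fm t v = (n : M t) + (2^t : ℕ))) := by
    rw [← Finset.filter_or]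
    apply Finset.filter_congr
    intro v _
    exact key_equiv t n v
  have hdisj : Disjoint
      (Finset.univ.filter (fun v : M t × M t × M t => Fm t v = (n : M t)))
      (Finset.univ.filter (fun v : M t × M t × M t => Fm t v = (n : M t) + (2^t : ℕ))) := by
    rw [Finset.disjoint_filter]
    intro v _ h1 h2
    rw [h1, left_eq_add] at h2
    exact two_pow_ne_zero' t h2
  rw [← Finset.card_union_of_disjoint hdisj, ← hsplit, hD, Finset.sum_const, smul_eq_mul,
    mul_comm]

lemma dvd2 (t : ℕ) : (2:ℕ) ∣ 2 ^ (t+1) := dvd_pow_self 2 (Nat.succ_ne_zero t)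

lemma odd_lift (t : ℕ) (u : M t) (h : ZMod.castHom (dvd2 t) (ZMod 2) u = 1) :
    ∃ w : M t, u = 1 + 2 * w := by
  haveI : NeZero (2 ^ (t+1)) := ⟨pow_ne_zero _ two_ne_zero⟩
  have h0 : ZMod.castHom (dvd2 t) (ZMod 2) (u - 1) = 0 := by
    rw [map_sub, h, map_one, sub_self]
  rw [ZMod.castHom_apply, ← ZMod.natCast_val, ZMod.natCast_eq_zero_iff] at h0
  obtain ⟨c, hc⟩ := h0
  refine ⟨(c : M t), ?_⟩
  have : ((u - 1).val : M t) = u - 1 := ZMod.natCast_zmod_val _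
  rw [hc] at this
  push_cast at this
  linear_combination -this

lemma x_odd (t : ℕ) (v : M t × M t × M t) (c : M t) (hFv : Fm t v = c)
    (hc : ZMod.castHom (dvd2 t) (ZMod 2) c = 1) : ∃ w : M t, v.1 = 1 + 2 * w := by
  apply odd_lift
  have h2 : ZMod.castHom (dvd2 t) (ZMod 2) (Fm t v) = 1 := by rw [hFv]; exact hc
  simp only [Fm, map_sub, map_mul, map_pow, map_ofNat] at h2
  generalize ZMod.castHom (dvd2 t) (ZMod 2) v.1 = x at h2 ⊢
  generalize ZMod.castHom (dvd2 t) (ZMod 2) v.2.1 = y at h2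
  generalize ZMod.castHom (dvd2 t) (ZMod 2) v.2.2 = z at h2
  revert h2; revert x y z; decide

lemma bij_lemma (k : ℕ) (n : ℤ) (hn : n % 2 = 1) :
    (Finset.univ.filter (fun v : M (k+3) × M (k+3) × M (k+3) =>
        Fm (k+3) v = (n : M (k+3)))).card =
    (Finset.univ.filter (fun v : M (k+3) × M (k+3) × M (k+3) =>
        Fm (k+3) v = (n : M (k+3)) + ((2^(k+3) : ℕ) : M (k+3)))).card := by
  classical
  have h0 : (2 : M (k+3)) ^ (k+4) = 0 := by
    have := ZMod.natCast_self (2 ^ (k+4))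
    push_cast at this
    exact this
  have hn2 : ZMod.castHom (dvd2 (k+3)) (ZMod 2) ((n : M (k+3))) = 1 := by
    rw [map_intCast]
    have h1 : ((1:ℤ) : ZMod 2) = 1 := by norm_num
    rw [← h1, ZMod.intCast_eq_intCast_iff']
    omega
  have hT : ((2^(k+3) : ℕ) : M (k+3)) = (2 : M (k+3))^(k+3) := by push_cast; ring
  have hn2' : ZMod.castHom (dvd2 (k+3)) (ZMod 2) ((n : M (k+3)) + ((2^(k+3):ℕ) : M (k+3))) = 1 := by
    rw [map_add, hn2, hT, map_pow]
    have : (ZMod.castHom (dvd2 (k+3)) (ZMod 2) 2) = 0 := by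
      have : ((2:ℕ) : M (k+3)) = (2 : M (k+3)) := by push_cast; ring
      rw [← this, map_natCast, ZMod.natCast_self]
    rw [this, zero_pow (by omega), add_zero]
  refine Finset.card_bij' (fun v _ => (v.1 + 2^(k+2), v.2)) (fun v _ => (v.1 - 2^(k+2), v.2))
    ?_ ?_ ?_ ?_
  · intro v hv
    simp only [Finset.mem_filter, Finset.mem_univ, true_and] at hv ⊢
    obtain ⟨w, hw⟩ := x_odd _ v _ hv hn2
    simp only [Fm] at hv ⊢
    rw [hT]
    linear_combination hv + (-(2: M (k+3))^(k+3))*hw + (-(2:M (k+3))^k - 1 - w)*h0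
  · intro v hv
    simp only [Finset.mem_filter, Finset.mem_univ, true_and] at hv ⊢
    obtain ⟨w, hw⟩ := x_odd _ v _ hv hn2'
    simp only [Fm] at hv ⊢
    rw [hT] at hv
    linear_combination hv + ((2: M (k+3))^(k+3))*hw + (-(2:M (k+3))^k + 1 + w)*h0
  · intro v hv; simp
  · intro v hv; simp

lemma dvd4 (t : ℕ) (ht : 2 ≤ t) : (4:ℕ) ∣ 2 ^ t := by
  have : (2:ℕ)^2 ∣ 2^t := pow_dvd_pow 2 ht
  norm_num at this; exact this

lemma zero_case (t : ℕ) (ht : 3 ≤ t) (n : ℤ) (hn : n % 4 = 1 ∨ n % 4 = 2) :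
    (Finset.univ.filter (fun v : R t × R t × R t => Fr t v = (n : R t))).card = 0 := by
  rw [Finset.card_eq_zero, Finset.filter_eq_empty_iff]
  intro v _
  intro h
  have h4 : ZMod.castHom (dvd4 t (by omega)) (ZMod 4) (Fr t v) =
      ZMod.castHom (dvd4 t (by omega)) (ZMod 4) ((n : R t)) := by rw [h]
  simp only [Fr, map_sub, map_mul, map_pow, map_ofNat, map_intCast] at h4
  generalize ZMod.castHom (dvd4 t (by omega)) (ZMod 4) v.1 = x at h4
  generalize ZMod.castHom (dvd4 t (by omega)) (ZMod 4) v.2.1 = y at h4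
  generalize ZMod.castHom (dvd4 t (by omega)) (ZMod 4) v.2.2 = z at h4
  rcases hn with hn | hn
  · have : ((n:ℤ) : ZMod 4) = ((1:ℤ) : ZMod 4) := by
      rw [ZMod.intCast_eq_intCast_iff']; omega
    rw [this] at h4
    revert h4; revert x y z; decide
  · have : ((n:ℤ) : ZMod 4) = ((2:ℤ) : ZMod 4) := by
      rw [ZMod.intCast_eq_intCast_iff']; omega
    rw [this] at h4
    revert h4; revert x y z; decide

lemma main_count_s10 (t : ℕ) (ht : 3 ≤ t) (n : ℤ) :
    (n % 8 = 7 → (Finset.univ.filter (fun v : R t × R t × R t =>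
        Fr t v = (n : R t))).card = 3 * 4 ^ t) ∧
    (n % 8 = 3 → (Finset.univ.filter (fun v : R t × R t × R t =>
        Fr t v = (n : R t))).card = 4 ^ t) := by
  induction t, ht using Nat.le_induction with
  | base =>
    constructor <;> intro h
    · have h7 : (n : R 3) = ((7:ℤ) : R 3) := by
        rw [ZMod.intCast_eq_intCast_iff']; push_cast; omega
      rw [h7]
      have : ((7:ℤ) : R 3) = (7 : R 3) := by push_cast; ring
      rw [this]
      simp only [Fr]
      decide
    · have h3 : (n : R 3) = ((3:ℤ) : R 3) := by
        rw [ZMod.intCast_eq_intCast_iff']; push_cast; omega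
      rw [h3]
      have : ((3:ℤ) : R 3) = (3 : R 3) := by push_cast; ring
      rw [this]
      simp only [Fr]
      decide
  | succ t ht ih =>
    obtain ⟨k, rfl⟩ : ∃ k, t = k + 3 := ⟨t - 3, by omega⟩
    have hodd : n % 8 = 7 ∨ n % 8 = 3 → n % 2 = 1 := by omega
    have hsc := step_count (k+3) n
    constructor <;> intro h
    · have hb := bij_lemma k n (hodd (Or.inl h))
      have hic := (ih.1 h)
      show (Finset.univ.filter (fun v : M (k+3) × M (k+3) × M (k+3) =>
        Fm (k+3) v = (n : M (k+3)))).card = 3 * 4 ^ (k+3+1)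
      rw [show (4:ℕ)^(k+3+1) = 4^(k+3)*4 from pow_succ 4 (k+3)]
      omega
    · have hb := bij_lemma k n (hodd (Or.inr h))
      have hic := (ih.2 h)
      show (Finset.univ.filter (fun v : M (k+3) × M (k+3) × M (k+3) =>
        Fm (k+3) v = (n : M (k+3)))).card = 4 ^ (k+3+1)
      rw [show (4:ℕ)^(k+3+1) = 4^(k+3)*4 from pow_succ 4 (k+3)]
      omega

theorem dyadic_count_G2_init (t : ℕ) (ht : 3 ≤ t) (n : ℤ) :
    (n % 8 = 7 → (cntG2 t n : ℤ) = 3 * 4 ^ t) ∧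
    (n % 8 = 3 → (cntG2 t n : ℤ) = 4 ^ t) ∧
    (n % 4 = 1 ∨ n % 4 = 2 → (cntG2 t n : ℤ) = 0) := by
  haveI : NeZero (2 ^ t) := ⟨pow_ne_zero t two_ne_zero⟩
  have hc : cntG2 t n = (Finset.univ.filter (fun v : R t × R t × R t =>
      Fr t v = (n : R t))).card := by
    unfold cntG2
    exact card_setOf _ _
  have hm := main_count_s10 t ht n
  refine ⟨fun h => ?_, fun h => ?_, fun h => ?_⟩
  · rw [hc, hm.1 h]; push_cast; ring
  · rw [hc, hm.2 h]; push_cast; ring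
  · rw [hc, zero_case t ht n h]; push_cast
end

section
/- For every integer t ≥ 3 and every integer n, 4·L₁ − L₂ = 3·4^t, where L₁ is the number of triples (x,y,z) ∈ (ℤ/2^tℤ)³ with y·z − x² = n and L₂ is the number of triples (x,y,z) ∈ (ℤ/2^tℤ)³ with 4·y·z − x² = n. -/
open Finset


namespace DyAux


instance (s : ℕ) : NeZero (2^(s+1)) := ⟨pow_ne_zero _ two_ne_zero⟩

/-- reduction mod 2 -/
def pr (s : ℕ) : ZMod (2^(s+1)) →+* ZMod 2 :=
  ZMod.castHom (dvd_pow_self 2 (Nat.succ_ne_zero s)) (ZMod 2)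

lemma z2cases (u : ZMod 2) : u = 0 ∨ u = 1 := by revert u; decide

lemma pr_eq_cast_val (s : ℕ) (y : ZMod (2^(s+1))) : pr s y = (y.val : ZMod 2) := by
  rw [pr, ZMod.castHom_apply, ZMod.natCast_val]

lemma pr_eq_zero_iff (s : ℕ) (y : ZMod (2^(s+1))) : pr s y = 0 ↔ 2 ∣ y.val := by
  rw [pr_eq_cast_val, ZMod.natCast_eq_zero_iff]

lemma pr_eq_one_iff (s : ℕ) (y : ZMod (2^(s+1))) : pr s y = 1 ↔ ¬ 2 ∣ y.val := by
  rw [← pr_eq_zero_iff s y]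
  rcases z2cases (pr s y) with h | h <;> simp [h]

lemma card_pr_fiber (s : ℕ) (b : ZMod 2) :
    #(univ.filter fun x : ZMod (2^(s+1)) => pr s x = b) = 2^s := by
  have h01 : #(univ.filter fun x : ZMod (2^(s+1)) => pr s x = 0)
      = #(univ.filter fun x : ZMod (2^(s+1)) => pr s x = 1) := by
    refine Finset.card_bij' (fun x _ => x + 1) (fun x _ => x - 1) ?_ ?_ ?_ ?_
    · intro a ha
      simp only [mem_filter, mem_univ, true_and] at ha ⊢
      rw [map_add, ha, map_one, zero_add]
    · intro a ha
      simp only [mem_filter, mem_univ, true_and] at ha ⊢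
      rw [map_sub, ha, map_one, sub_self]
    · intro a _; ring
    · intro a _; ring
  have hneg : (univ.filter fun x : ZMod (2^(s+1)) => ¬ pr s x = 0)
      = univ.filter fun x => pr s x = 1 := by
    apply filter_congr; intro x _
    rcases z2cases (pr s x) with h | h <;> simp [h]
  have hsum := Finset.card_filter_add_card_filter_not
    (s := (univ : Finset (ZMod (2^(s+1))))) (p := fun x => pr s x = 0)
  rw [hneg, card_univ, ZMod.card] at hsum
  have hp : (2:ℕ)^(s+1) = 2^s + 2^s := by ring
  rcases z2cases b with rfl | rfl <;> omega

lemma isUnit_of_pr_eq_one (s : ℕ) {y : ZMod (2^(s+1))} (hy : pr s y = 1) : IsUnit y := by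
  rw [pr_eq_one_iff] at hy
  have h1 : ((y.val : ℕ) : ZMod (2^(s+1))) = y := ZMod.natCast_rightInverse y
  rw [← h1, ZMod.isUnit_iff_coprime]
  exact Nat.Coprime.pow_right _ ((Nat.Prime.coprime_iff_not_dvd Nat.prime_two).mpr hy).symm

lemma two_torsion (s : ℕ) {x : ZMod (2^(s+1))} (hx : 2 * x = 0) :
    x = 0 ∨ x = ((2^s : ℕ) : ZMod (2^(s+1))) := by
  have hxv : ((x.val : ℕ) : ZMod (2^(s+1))) = x := ZMod.natCast_rightInverse x
  have hdvd : (2^(s+1)) ∣ 2 * x.val := by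
    rw [← ZMod.natCast_eq_zero_iff]
    push_cast
    rw [hxv, hx]
  obtain ⟨k, hk⟩ := hdvd
  have hlt : x.val < 2^(s+1) := ZMod.val_lt x
  have hp : (2:ℕ)^(s+1) = 2 * 2^s := by ring
  have hx2 : x.val = 2^s * k := by
    have h2 : 2 * x.val = 2 * (2^s * k) := by rw [hk, hp]; ring
    omega
  have hk2 : k = 0 ∨ k = 1 := by
    rcases Nat.lt_or_ge k 2 with h | h
    · omega
    · exfalso; nlinarith [Nat.one_le_two_pow (n := s)]
  rcases hk2 with rfl | rfl
  · left; rw [← hxv, hx2]; simp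
  · right; rw [← hxv, hx2]; simp

lemma exists_half (s : ℕ) {u : ZMod (2^(s+1))} (hu : pr s u = 0) : ∃ a, u = 2 * a := by
  rw [pr_eq_zero_iff] at hu
  obtain ⟨m, hm⟩ := hu
  refine ⟨(m : ZMod (2^(s+1))), ?_⟩
  have huv : ((u.val : ℕ) : ZMod (2^(s+1))) = u := ZMod.natCast_rightInverse u
  rw [← huv, hm]; push_cast; ring


lemma card_half_fiber (s : ℕ) {u : ZMod (2^(s+1))} (hu : pr s u = 0) :
    #(univ.filter fun a : ZMod (2^(s+1)) => 2 * a = u) = 2 := by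
  obtain ⟨a₀, rfl⟩ := exists_half s hu
  have hh : (2 : ZMod (2^(s+1))) * ((2^s : ℕ) : ZMod (2^(s+1))) = 0 := by
    have h0 : ((2^(s+1) : ℕ) : ZMod (2^(s+1))) = 0 := ZMod.natCast_self _
    push_cast at h0 ⊢
    rw [← h0]; ring
  have hne : ((2^s : ℕ) : ZMod (2^(s+1))) ≠ 0 := by
    rw [Ne, ZMod.natCast_eq_zero_iff]
    intro hdvd
    have hle := Nat.le_of_dvd (by positivity) hdvd
    have h2 : (2:ℕ)^(s+1) = 2^s + 2^s := by ring
    have h3 : (1:ℕ) ≤ 2^s := Nat.one_le_two_pow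
    omega
  have hset : (univ.filter fun a : ZMod (2^(s+1)) => 2 * a = 2 * a₀)
      = {a₀, a₀ + ((2^s : ℕ) : ZMod (2^(s+1)))} := by
    ext a
    simp only [mem_filter, mem_univ, true_and, mem_insert, mem_singleton]
    constructor
    · intro h
      have h2 : 2 * (a - a₀) = 0 := by rw [mul_sub, h, sub_self]
      rcases two_torsion s h2 with h' | h'
      · left; have := sub_eq_zero.mp h'; exact this
      · right; rw [← h']; ring
    · rintro (rfl | rfl)
      · rfl
      · rw [mul_add, hh, add_zero]
  rw [hset, card_insert_of_notMem, card_singleton]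
  simp only [mem_singleton]
  intro h
  exact hne (by linear_combination -h)

variable (s : ℕ)

def Ac (c : ZMod (2^(s+1))) : ℕ :=
  #(univ.filter fun p : ZMod (2^(s+1)) × ZMod (2^(s+1)) => p.1 * p.2 = c)

def Bc (c : ZMod (2^(s+1))) : ℕ :=
  #(univ.filter fun p : ZMod (2^(s+1)) × ZMod (2^(s+1)) => 4 * p.1 * p.2 = c)

def Eodd (c : ZMod (2^(s+1))) : ℕ :=
  #(univ.filter fun p : ZMod (2^(s+1)) × ZMod (2^(s+1)) => p.1 * p.2 = c ∧ pr s p.1 = 1)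

def Eze (c : ZMod (2^(s+1))) : ℕ :=
  #(univ.filter fun p : ZMod (2^(s+1)) × ZMod (2^(s+1)) =>
    (p.1 * p.2 = c ∧ pr s p.1 = 0) ∧ pr s p.2 = 1)

def Eee (c : ZMod (2^(s+1))) : ℕ :=
  #(univ.filter fun p : ZMod (2^(s+1)) × ZMod (2^(s+1)) =>
    (p.1 * p.2 = c ∧ pr s p.1 = 0) ∧ pr s p.2 = 0)

lemma card_split {α : Type*} [Fintype α] (P : α → Prop) (f : α → ZMod 2) [DecidablePred P] :
    #(univ.filter P)
      = #(univ.filter fun a => P a ∧ f a = 1) + #(univ.filter fun a => P a ∧ f a = 0) := by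
  classical
  rw [← filter_filter, ← filter_filter]
  have hneg : ((univ.filter P).filter fun a => ¬ f a = 1)
      = (univ.filter P).filter fun a => f a = 0 := by
    apply filter_congr; intro x _
    rcases z2cases (f x) with h | h <;> simp [h]
  rw [← hneg]
  exact (card_filter_add_card_filter_not _).symm

lemma Ac_split (c : ZMod (2^(s+1))) : Ac s c = Eodd s c + (Eze s c + Eee s c) := by
  rw [Ac, card_split _ (fun p => pr s p.1), Eodd]
  congr 1
  rw [card_split (fun p : ZMod (2^(s+1)) × ZMod (2^(s+1)) => p.1 * p.2 = c ∧ pr s p.1 = 0)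
    (fun p => pr s p.2), Eze, Eee]

lemma Eodd_eq (c : ZMod (2^(s+1))) : Eodd s c = 2^s := by
  rw [Eodd, ← card_pr_fiber s 1]
  refine Finset.card_bij' (fun p _ => p.1) (fun y _ => (y, Ring.inverse y * c)) ?_ ?_ ?_ ?_
  · intro p hp; simp only [mem_filter, mem_univ, true_and] at hp ⊢; exact hp.2
  · intro y hy; simp only [mem_filter, mem_univ, true_and] at hy ⊢
    exact ⟨by rw [← mul_assoc, Ring.mul_inverse_cancel _ (isUnit_of_pr_eq_one s hy), one_mul], hy⟩
  · intro p hp; simp only [mem_filter, mem_univ, true_and] at hp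
    obtain ⟨h1, h2⟩ := hp
    have hu := isUnit_of_pr_eq_one s h2
    refine Prod.ext rfl ?_
    show Ring.inverse p.1 * c = p.2
    rw [← h1, ← mul_assoc, Ring.inverse_mul_cancel _ hu, one_mul]
  · intro y _; rfl

lemma Eze_eq_zero (c : ZMod (2^(s+1))) (hc : pr s c = 1) : Eze s c = 0 := by
  rw [Eze, Finset.card_eq_zero, Finset.filter_eq_empty_iff]
  intro p _
  rintro ⟨⟨h1, h2⟩, -⟩
  rw [← h1, map_mul, h2, zero_mul] at hc
  exact (by decide : (0:ZMod 2) ≠ 1) hc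

lemma Eze_eq (c : ZMod (2^(s+1))) (hc : pr s c = 0) : Eze s c = 2^s := by
  rw [Eze, ← card_pr_fiber s 1]
  refine Finset.card_bij' (fun p _ => p.2) (fun z _ => (Ring.inverse z * c, z)) ?_ ?_ ?_ ?_
  · intro p hp; simp only [mem_filter, mem_univ, true_and] at hp ⊢; exact hp.2
  · intro z hz; simp only [mem_filter, mem_univ, true_and] at hz ⊢
    have hu := isUnit_of_pr_eq_one s hz
    refine ⟨⟨?_, ?_⟩, hz⟩
    · rw [mul_right_comm, Ring.inverse_mul_cancel _ hu, one_mul]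
    · rw [map_mul, hc, mul_zero]
  · intro p hp; simp only [mem_filter, mem_univ, true_and] at hp
    obtain ⟨⟨h1, -⟩, h2⟩ := hp
    have hu := isUnit_of_pr_eq_one s h2
    refine Prod.ext ?_ rfl
    show Ring.inverse p.2 * c = p.1
    rw [← h1, mul_comm p.1 p.2, ← mul_assoc, Ring.inverse_mul_cancel _ hu, one_mul]
  · intro z _; rfl

lemma pr_two_mul (x : ZMod (2^(s+1))) : pr s (2 * x) = 0 := by
  rw [map_mul, map_ofNat, show (2 : ZMod 2) = 0 by decide, zero_mul]

lemma Bc_eq (c : ZMod (2^(s+1))) : Bc s c = 4 * Eee s c := by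
  classical
  have hmem : ∀ p ∈ (univ.filter fun p : ZMod (2^(s+1)) × ZMod (2^(s+1)) => 4 * p.1 * p.2 = c),
      ((2 * p.1, 2 * p.2) : ZMod (2^(s+1)) × ZMod (2^(s+1))) ∈
        (univ.filter fun q : ZMod (2^(s+1)) × ZMod (2^(s+1)) =>
          (q.1 * q.2 = c ∧ pr s q.1 = 0) ∧ pr s q.2 = 0) := by
    intro p hp
    simp only [mem_filter, mem_univ, true_and] at hp ⊢
    exact ⟨⟨by rw [← hp]; ring, pr_two_mul s p.1⟩, pr_two_mul s p.2⟩
  rw [Bc, Finset.card_eq_sum_card_fiberwise hmem]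
  have hfib : ∀ q ∈ (univ.filter fun q : ZMod (2^(s+1)) × ZMod (2^(s+1)) =>
      (q.1 * q.2 = c ∧ pr s q.1 = 0) ∧ pr s q.2 = 0),
      #(((univ.filter fun p : ZMod (2^(s+1)) × ZMod (2^(s+1)) => 4 * p.1 * p.2 = c)).filter
        (fun p => ((2 * p.1, 2 * p.2) : ZMod (2^(s+1)) × ZMod (2^(s+1))) = q)) = 4 := by
    intro q hq
    simp only [mem_filter, mem_univ, true_and] at hq
    obtain ⟨⟨hqc, hq1⟩, hq2⟩ := hq
    have heq : (((univ.filter fun p : ZMod (2^(s+1)) × ZMod (2^(s+1)) => 4 * p.1 * p.2 = c)).filter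
        (fun p => ((2 * p.1, 2 * p.2) : ZMod (2^(s+1)) × ZMod (2^(s+1))) = q))
        = univ.filter fun p : ZMod (2^(s+1)) × ZMod (2^(s+1)) => 2 * p.1 = q.1 ∧ 2 * p.2 = q.2 := by
      rw [filter_filter]
      apply filter_congr; intro p _
      simp only [Prod.ext_iff]
      constructor
      · rintro ⟨-, h1, h2⟩; exact ⟨h1, h2⟩
      · rintro ⟨h1, h2⟩
        refine ⟨?_, h1, h2⟩
        calc 4 * p.1 * p.2 = (2 * p.1) * (2 * p.2) := by ring
        _ = q.1 * q.2 := by rw [h1, h2]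
        _ = c := hqc
    rw [heq, ← Finset.univ_product_univ,
      Finset.filter_product (fun a : ZMod (2^(s+1)) => 2 * a = q.1)
        (fun b : ZMod (2^(s+1)) => 2 * b = q.2),
      Finset.card_product, card_half_fiber s hq1, card_half_fiber s hq2]
  rw [Finset.sum_congr rfl hfib, Finset.sum_const, smul_eq_mul, mul_comm, Eee]

lemma card_half_fiber' : True := trivial

lemma key (c : ZMod (2^(s+1))) :
    4 * (Ac s c : ℤ) - (Bc s c : ℤ) = if pr s c = 0 then 2^(s+3) else 2^(s+2) := by
  rw [Ac_split, Bc_eq, Eodd_eq]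
  rcases z2cases (pr s c) with h | h
  · rw [Eze_eq s c h, if_pos h]; push_cast; ring
  · rw [Eze_eq_zero s c h, if_neg (by rw [h]; decide)]; push_cast; ring


lemma cnt1_eq (n : ℤ) :
    cntG1 (s+1) n = ∑ x : ZMod (2^(s+1)), Ac s ((n : ZMod (2^(s+1))) + x^2) := by
  classical
  rw [cntG1, Nat.card_eq_fintype_card, Fintype.card_subtype]
  rw [Finset.card_eq_sum_card_fiberwise
    (f := fun v : ZMod (2^(s+1)) × ZMod (2^(s+1)) × ZMod (2^(s+1)) => v.1)
    (t := univ) (fun _ _ => mem_univ _)]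
  refine Finset.sum_congr rfl fun x _ => ?_
  rw [Ac]
  refine Finset.card_bij' (fun v _ => v.2) (fun p _ => (x, p)) ?_ ?_ ?_ ?_
  · intro v hv
    simp only [mem_filter, mem_univ, true_and, Set.mem_setOf_eq] at hv ⊢
    obtain ⟨h1, h2⟩ := hv
    rw [← h2]
    linear_combination h1
  · intro p hp
    simp only [mem_filter, mem_univ, true_and, Set.mem_setOf_eq] at hp ⊢
    exact ⟨by linear_combination hp, trivial⟩
  · intro v hv
    simp only [mem_filter, mem_univ, true_and, Set.mem_setOf_eq] at hv
    exact Prod.ext hv.2.symm rfl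
  · intro p _; rfl

lemma cnt2_eq (n : ℤ) :
    cntG2 (s+1) n = ∑ x : ZMod (2^(s+1)), Bc s ((n : ZMod (2^(s+1))) + x^2) := by
  classical
  rw [cntG2, Nat.card_eq_fintype_card, Fintype.card_subtype]
  rw [Finset.card_eq_sum_card_fiberwise
    (f := fun v : ZMod (2^(s+1)) × ZMod (2^(s+1)) × ZMod (2^(s+1)) => v.1)
    (t := univ) (fun _ _ => mem_univ _)]
  refine Finset.sum_congr rfl fun x _ => ?_
  rw [Bc]
  refine Finset.card_bij' (fun v _ => v.2) (fun p _ => (x, p)) ?_ ?_ ?_ ?_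
  · intro v hv
    simp only [mem_filter, mem_univ, true_and, Set.mem_setOf_eq] at hv ⊢
    obtain ⟨h1, h2⟩ := hv
    rw [← h2]
    linear_combination h1
  · intro p hp
    simp only [mem_filter, mem_univ, true_and, Set.mem_setOf_eq] at hp ⊢
    exact ⟨by linear_combination hp, trivial⟩
  · intro v hv
    simp only [mem_filter, mem_univ, true_and, Set.mem_setOf_eq] at hv
    exact Prod.ext hv.2.symm rfl
  · intro p _; rfl

end DyAux

theorem dyadic_count_relation (t : ℕ) (ht : 3 ≤ t) (n : ℤ) :
    4 * (cntG1 t n : ℤ) - (cntG2 t n : ℤ) = 3 * 4 ^ t := by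
  classical
  obtain ⟨s, rfl⟩ : ∃ s, t = s + 1 := ⟨t - 1, by omega⟩
  rw [DyAux.cnt1_eq, DyAux.cnt2_eq]
  push_cast
  rw [Finset.mul_sum, ← Finset.sum_sub_distrib]
  rw [Finset.sum_congr rfl fun x _ => DyAux.key s ((n : ZMod (2^(s+1))) + x^2)]
  have hiff : ∀ x : ZMod (2^(s+1)),
      (DyAux.pr s ((n : ZMod (2^(s+1))) + x^2) = 0)
        ↔ DyAux.pr s x = DyAux.pr s ((n : ZMod (2^(s+1)))) := by
    intro x
    rw [map_add, map_pow]
    have hsq : ∀ u : ZMod 2, u^2 = u := by decide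
    rw [hsq]
    have h2 : ∀ a b : ZMod 2, a + b = 0 ↔ b = a := by decide
    exact h2 _ _
  rw [Finset.sum_ite]
  have e1 : (univ.filter fun x : ZMod (2^(s+1)) => DyAux.pr s ((n : ZMod (2^(s+1))) + x^2) = 0)
      = univ.filter fun x => DyAux.pr s x = DyAux.pr s ((n : ZMod (2^(s+1)))) :=
    filter_congr fun x _ => by rw [hiff x]
  have e2 : (univ.filter fun x : ZMod (2^(s+1)) =>
        ¬ DyAux.pr s ((n : ZMod (2^(s+1))) + x^2) = 0)
      = univ.filter fun x => ¬ DyAux.pr s x = DyAux.pr s ((n : ZMod (2^(s+1)))) :=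
    filter_congr fun x _ => by rw [hiff x]
  rw [e1, e2, Finset.sum_const, Finset.sum_const]
  have h1 : #(univ.filter fun x : ZMod (2^(s+1)) =>
      DyAux.pr s x = DyAux.pr s ((n : ZMod (2^(s+1))))) = 2^s := DyAux.card_pr_fiber s _
  have h2 : #(univ.filter fun x : ZMod (2^(s+1)) =>
      ¬ DyAux.pr s x = DyAux.pr s ((n : ZMod (2^(s+1))))) = 2^s := by
    have hadd := Finset.card_filter_add_card_filter_not
      (s := (univ : Finset (ZMod (2^(s+1)))))
      (p := fun x => DyAux.pr s x = DyAux.pr s ((n : ZMod (2^(s+1)))))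
    rw [h1, card_univ, ZMod.card] at hadd
    have hp : (2:ℕ)^(s+1) = 2^s + 2^s := by ring
    omega
  rw [h1, h2]
  simp only [nsmul_eq_mul]
  push_cast
  have h4 : (4:ℤ)^(s+1) = 2^s * 2^(s+2) := by
    rw [show (4:ℤ) = 2^2 by norm_num, ← pow_mul, ← pow_add]
    congr 1
    ring
  rw [h4]
  ring
end

section
/- For every integer t ≥ 2 and every integer n, the number of triples (x,y,z) ∈ (ℤ/2^tℤ)³ with 4·y·z − x² = 4n equals 32 times the number of triples (x,y,z) ∈ (ℤ/2^{t−2}ℤ)³ with y·z − x² = n. -/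
theorem dyadic_count_scaling (t : ℕ) (ht : 2 ≤ t) (n : ℤ) :
    cntG2 t (4 * n) = 32 * cntG1 (t - 2) n := by
  obtain ⟨s, rfl⟩ : ∃ s, t = s + 2 := ⟨t - 2, by omega⟩
  have hts : s + 2 - 2 = s := by omega
  rw [hts]
  unfold cntG1 cntG2
  set M : ℕ := 2 ^ s with hMdef
  have hM : 0 < M := by positivity
  haveI : NeZero M := ⟨by omega⟩
  set N : ℕ := 2 ^ (s + 2) with hNdef
  have hNM : N = 4 * M := by rw [hNdef, hMdef]; ring
  haveI : NeZero N := ⟨by rw [hNdef]; positivity⟩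
  have hNMZ : (N : ℤ) = 4 * (M : ℤ) := by exact_mod_cast congrArg (Nat.cast : ℕ → ℤ) hNM
  have key : Nat.card ((ZMod 2 × ZMod 4 × ZMod 4) ×
      {w : ZMod M × ZMod M × ZMod M | w.2.1 * w.2.2 - w.1 ^ 2 = (n : ZMod M)}) =
      Nat.card {v : ZMod N × ZMod N × ZMod N |
        4 * v.2.1 * v.2.2 - v.1 ^ 2 = ((4 * n : ℤ) : ZMod N)} := by
    have hmem : ∀ (a : ZMod 2) (b c : ZMod 4) (w : ZMod M × ZMod M × ZMod M),
        w.2.1 * w.2.2 - w.1 ^ 2 = (n : ZMod M) →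
        4 * ((w.2.1.val + b.val * M : ℕ) : ZMod N) *
            ((w.2.2.val + c.val * M : ℕ) : ZMod N) -
          ((2 * (w.1.val + a.val * M) : ℕ) : ZMod N) ^ 2 = ((4 * n : ℤ) : ZMod N) := by
      intro a b c w hw
      have h0 : ((w.2.1.val * w.2.2.val - w.1.val ^ 2 - n : ℤ) : ZMod M) = 0 := by
        push_cast
        simp only [ZMod.natCast_val, ZMod.cast_id]
        rw [hw]; ring
      obtain ⟨k, hk⟩ := (ZMod.intCast_zmod_eq_zero_iff_dvd _ _).mp h0
      have h2 : ((4 * (w.2.1.val + b.val * M) * (w.2.2.val + c.val * M)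
          - (2 * (w.1.val + a.val * M)) ^ 2 - 4 * n : ℤ) : ZMod N) = 0 := by
        rw [ZMod.intCast_zmod_eq_zero_iff_dvd]
        refine ⟨k + (c.val : ℤ) * w.2.1.val + (b.val : ℤ) * w.2.2.val
            + (b.val : ℤ) * c.val * M - 2 * (a.val : ℤ) * w.1.val
            - (a.val : ℤ) ^ 2 * M, ?_⟩
        rw [hNMZ]
        linear_combination 4 * hk
      push_cast at h2 ⊢
      linear_combination h2
    apply Nat.card_eq_of_bijective (fun p =>
      ⟨(((2 * (p.2.1.1.val + p.1.1.val * M) : ℕ) : ZMod N),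
        ((p.2.1.2.1.val + p.1.2.1.val * M : ℕ) : ZMod N),
        ((p.2.1.2.2.val + p.1.2.2.val * M : ℕ) : ZMod N)),
        hmem p.1.1 p.1.2.1 p.1.2.2 p.2.1 p.2.2⟩)
    constructor
    · rintro ⟨⟨a1, b1, c1⟩, ⟨⟨x1, y1, z1⟩, h1⟩⟩ ⟨⟨a2, b2, c2⟩, ⟨⟨x2, y2, z2⟩, h2⟩⟩ heq
      simp only [Subtype.mk.injEq, Prod.mk.injEq] at heq
      obtain ⟨ex, ey, ez⟩ := heq
      have hvM : ∀ u : ZMod M, u.val < M := fun u => ZMod.val_lt u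
      have hv2 : ∀ u : ZMod 2, u.val < 2 := fun u => ZMod.val_lt u
      have hv4 : ∀ u : ZMod 4, u.val < 4 := fun u => ZMod.val_lt u
      have hb2 : ∀ u : ZMod 2, u.val * M ≤ 1 * M :=
        fun u => Nat.mul_le_mul_right M (by have := hv2 u; omega)
      have hb4 : ∀ u : ZMod 4, u.val * M ≤ 3 * M :=
        fun u => Nat.mul_le_mul_right M (by have := hv4 u; omega)
      have ex' : 2 * (x1.val + a1.val * M) = 2 * (x2.val + a2.val * M) := by
        have l1 : 2 * (x1.val + a1.val * M) < N := by
          have := hvM x1; have := hb2 a1; omega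
        have l2 : 2 * (x2.val + a2.val * M) < N := by
          have := hvM x2; have := hb2 a2; omega
        rw [← ZMod.val_cast_of_lt l1, ← ZMod.val_cast_of_lt l2, ex]
      have ey' : y1.val + b1.val * M = y2.val + b2.val * M := by
        have l1 : y1.val + b1.val * M < N := by
          have := hvM y1; have := hb4 b1; omega
        have l2 : y2.val + b2.val * M < N := by
          have := hvM y2; have := hb4 b2; omega
        rw [← ZMod.val_cast_of_lt l1, ← ZMod.val_cast_of_lt l2, ey]
      have ez' : z1.val + c1.val * M = z2.val + c2.val * M := by
        have l1 : z1.val + c1.val * M < N := by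
          have := hvM z1; have := hb4 c1; omega
        have l2 : z2.val + c2.val * M < N := by
          have := hvM z2; have := hb4 c2; omega
        rw [← ZMod.val_cast_of_lt l1, ← ZMod.val_cast_of_lt l2, ez]
      have ex'' : x1.val + a1.val * M = x2.val + a2.val * M := by omega
      have hxv : x1.val = x2.val := by
        have := congrArg (· % M) ex''
        simpa [Nat.add_mul_mod_self_right, Nat.mod_eq_of_lt (hvM x1),
          Nat.mod_eq_of_lt (hvM x2)] using this
      have hav : a1.val = a2.val := by
        have := congrArg (· / M) ex''
        simpa [Nat.add_mul_div_right _ _ hM, Nat.div_eq_of_lt (hvM x1),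
          Nat.div_eq_of_lt (hvM x2)] using this
      have hyv : y1.val = y2.val := by
        have := congrArg (· % M) ey'
        simpa [Nat.add_mul_mod_self_right, Nat.mod_eq_of_lt (hvM y1),
          Nat.mod_eq_of_lt (hvM y2)] using this
      have hbv : b1.val = b2.val := by
        have := congrArg (· / M) ey'
        simpa [Nat.add_mul_div_right _ _ hM, Nat.div_eq_of_lt (hvM y1),
          Nat.div_eq_of_lt (hvM y2)] using this
      have hzv : z1.val = z2.val := by
        have := congrArg (· % M) ez'
        simpa [Nat.add_mul_mod_self_right, Nat.mod_eq_of_lt (hvM z1),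
          Nat.mod_eq_of_lt (hvM z2)] using this
      have hcv : c1.val = c2.val := by
        have := congrArg (· / M) ez'
        simpa [Nat.add_mul_div_right _ _ hM, Nat.div_eq_of_lt (hvM z1),
          Nat.div_eq_of_lt (hvM z2)] using this
      simp only [Prod.mk.injEq, Subtype.mk.injEq]
      exact ⟨⟨ZMod.val_injective 2 hav, ZMod.val_injective 4 hbv, ZMod.val_injective 4 hcv⟩,
        ZMod.val_injective M hxv, ZMod.val_injective M hyv, ZMod.val_injective M hzv⟩
    · rintro ⟨⟨x, y, z⟩, hv⟩
      have hv' : 4 * y * z - x ^ 2 = ((4 * n : ℤ) : ZMod N) := hv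
      push_cast at hv'
      have h0 : ((4 * ((y.val : ℤ) * z.val) - (x.val : ℤ) ^ 2 - 4 * n : ℤ) : ZMod N) = 0 := by
        push_cast
        simp only [ZMod.natCast_val, ZMod.cast_id]
        linear_combination hv'
      obtain ⟨w0, hw0⟩ := (ZMod.intCast_zmod_eq_zero_iff_dvd _ _).mp h0
      have h4 : (4 : ℤ) ∣ (x.val : ℤ) ^ 2 :=
        ⟨(y.val : ℤ) * z.val - n - (M : ℤ) * w0, by rw [hNMZ] at hw0; linarith⟩
      have h2x : 2 ∣ x.val := by
        have h2 : (2 : ℕ) ∣ x.val ^ 2 := by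
          have : (2 : ℤ) ∣ ((x.val ^ 2 : ℕ) : ℤ) := by
            push_cast
            exact dvd_trans ⟨2, by norm_num⟩ h4
          exact_mod_cast this
        exact Nat.Prime.dvd_of_dvd_pow Nat.prime_two h2
      obtain ⟨k, hkx⟩ := h2x
      have hxlt := ZMod.val_lt x
      have hylt := ZMod.val_lt y
      have hzlt := ZMod.val_lt z
      have hkM : k < 2 * M := by omega
      have hkx' : (x.val : ℤ) = 2 * (k : ℤ) := by exact_mod_cast hkx
      have hMd : ((y.val : ℤ) * z.val - (k : ℤ) ^ 2 - n) = (M : ℤ) * w0 := by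
        apply mul_left_cancel₀ (by norm_num : (4 : ℤ) ≠ 0)
        rw [hNMZ] at hw0
        linear_combination hw0 + ((x.val : ℤ) + 2 * (k : ℤ)) * hkx'
      have hQ : ((y.val : ℕ) : ZMod M) * ((z.val : ℕ) : ZMod M)
          - ((k : ℕ) : ZMod M) ^ 2 = (n : ZMod M) := by
        have h0' : (((y.val : ℤ) * z.val - (k : ℤ) ^ 2 - n : ℤ) : ZMod M) = 0 :=
          (ZMod.intCast_zmod_eq_zero_iff_dvd _ _).mpr ⟨w0, hMd⟩
        push_cast at h0'
        linear_combination h0'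
      refine ⟨⟨(((k / M : ℕ) : ZMod 2), ((y.val / M : ℕ) : ZMod 4), ((z.val / M : ℕ) : ZMod 4)),
        ⟨((k : ℕ) : ZMod M), ((y.val : ℕ) : ZMod M), ((z.val : ℕ) : ZMod M)⟩, hQ⟩, ?_⟩
      apply Subtype.ext
      have e1 : 2 * (((k : ℕ) : ZMod M).val + (((k / M : ℕ) : ZMod 2)).val * M) = x.val := by
        rw [ZMod.val_natCast, ZMod.val_natCast]
        have h1 : k / M < 2 := (Nat.div_lt_iff_lt_mul hM).mpr (by omega)
        rw [Nat.mod_eq_of_lt h1]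
        have := Nat.mod_add_div' k M
        omega
      have e2 : ((y.val : ℕ) : ZMod M).val + (((y.val / M : ℕ) : ZMod 4)).val * M = y.val := by
        rw [ZMod.val_natCast, ZMod.val_natCast]
        have h1 : y.val / M < 4 := (Nat.div_lt_iff_lt_mul hM).mpr (by omega)
        rw [Nat.mod_eq_of_lt h1]
        have := Nat.mod_add_div' y.val M
        omega
      have e3 : ((z.val : ℕ) : ZMod M).val + (((z.val / M : ℕ) : ZMod 4)).val * M = z.val := by
        rw [ZMod.val_natCast, ZMod.val_natCast]
        have h1 : z.val / M < 4 := (Nat.div_lt_iff_lt_mul hM).mpr (by omega)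
        rw [Nat.mod_eq_of_lt h1]
        have := Nat.mod_add_div' z.val M
        omega
      show ((_ : ZMod N), (_ : ZMod N), (_ : ZMod N)) = (x, y, z)
      rw [e1, e2, e3]
      simp [ZMod.natCast_val, ZMod.cast_id]
  rw [← key, Nat.card_prod, Nat.card_prod, Nat.card_prod, Nat.card_zmod, Nat.card_zmod]
end
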